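/- arXiv:2204.03017 — 4 statements merged into one kernel-verified Lean document; each statement's English description precedes it below -/
import Mathlib

section
/- Let 𝓛 : ℝ^d → ℝ be differentiable, L-smooth, and satisfy the μ-PL condition with infimum value 𝓛*. Let w ∈ ℝ^d and let G be a square-integrable ℝ^d-valued random vector with E[G] = ∇𝓛(w) and E[‖G − ∇𝓛(w)‖²] ≤ (h/2)‖∇𝓛(w)‖² + σ², where h ≥ 0 and σ ≥ 0. Then for every step size η with 0 < η ≤ 1/(L(1 + h)), the stochastic gradient step W⁺ = w − ηG satisfies E[𝓛(W⁺)] − 𝓛* ≤ (1 − ημ)(𝓛(w) − 𝓛*) + η²Lσ²/2. -/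
open MeasureTheory RealInnerProductSpace

lemma descent_lemma {d : ℕ} (𝓛 : EuclideanSpace ℝ (Fin d) → ℝ) (L : ℝ)
    (hdiff : Differentiable ℝ 𝓛) (hL : 0 < L)
    (hsmooth : LipschitzWith (Real.toNNReal L) (gradient 𝓛))
    (x y : EuclideanSpace ℝ (Fin d)) :
    𝓛 y ≤ 𝓛 x + ⟪gradient 𝓛 x, y - x⟫ + L / 2 * ‖y - x‖ ^ 2 := by
  set v := y - x with hv
  have hline : ∀ t : ℝ, HasDerivAt (fun t : ℝ => x + t • v) v t := by
    intro t
    simpa using ((hasDerivAt_id t).smul_const v).const_add x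
  have hphi : ∀ t : ℝ, HasDerivAt (fun t : ℝ => 𝓛 (x + t • v))
      ⟪gradient 𝓛 (x + t • v), v⟫ t := by
    intro t
    have hf : HasFDerivAt 𝓛
        ((InnerProductSpace.toDual ℝ _) (gradient 𝓛 (x + t • v))) (x + t • v) :=
      hasGradientAt_iff_hasFDerivAt.mp (hdiff _).hasGradientAt
    simpa [InnerProductSpace.toDual_apply_apply, Function.comp_def] using hf.comp_hasDerivAt t (hline t)
  have hcont : Continuous fun t : ℝ => ⟪gradient 𝓛 (x + t • v), v⟫ := by
    exact (hsmooth.continuous.comp (continuous_const.add (continuous_id.smul continuous_const))).inner continuous_const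
  have hftc : ∫ t in (0:ℝ)..1, ⟪gradient 𝓛 (x + t • v), v⟫ = 𝓛 y - 𝓛 x := by
    have := intervalIntegral.integral_eq_sub_of_hasDerivAt
      (f := fun t : ℝ => 𝓛 (x + t • v)) (fun t _ => hphi t)
      (hcont.intervalIntegrable 0 1)
    simpa [hv] using this
  have hbound : ∀ t ∈ Set.Icc (0:ℝ) 1,
      ⟪gradient 𝓛 (x + t • v), v⟫ ≤ ⟪gradient 𝓛 x, v⟫ + L * ‖v‖ ^ 2 * t := by
    intro t ht
    have h1 : ⟪gradient 𝓛 (x + t • v) - gradient 𝓛 x, v⟫ ≤ L * ‖v‖ ^ 2 * t := by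
      calc ⟪gradient 𝓛 (x + t • v) - gradient 𝓛 x, v⟫
          ≤ ‖gradient 𝓛 (x + t • v) - gradient 𝓛 x‖ * ‖v‖ := real_inner_le_norm _ _
        _ ≤ (L * ‖t • v‖) * ‖v‖ := by
            gcongr
            have := hsmooth.dist_le_mul (x + t • v) x
            simpa [dist_eq_norm, Real.coe_toNNReal L hL.le] using this
        _ = L * (|t| * ‖v‖) * ‖v‖ := by rw [norm_smul]; simp [Real.norm_eq_abs]
        _ = L * ‖v‖ ^ 2 * |t| := by ring
        _ = L * ‖v‖ ^ 2 * t := by rw [abs_of_nonneg ht.1]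
    have h2 : ⟪gradient 𝓛 (x + t • v), v⟫
        = ⟪gradient 𝓛 x, v⟫ + ⟪gradient 𝓛 (x + t • v) - gradient 𝓛 x, v⟫ := by
      rw [inner_sub_left]; ring
    linarith
  have hmono : ∫ t in (0:ℝ)..1, ⟪gradient 𝓛 (x + t • v), v⟫
      ≤ ∫ t in (0:ℝ)..1, (⟪gradient 𝓛 x, v⟫ + L * ‖v‖ ^ 2 * t) := by
    apply intervalIntegral.integral_mono_on (by norm_num)
      (hcont.intervalIntegrable 0 1) ((continuous_const.add (continuous_const.mul continuous_id)).intervalIntegrable 0 1)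
      hbound
  have hval : ∫ t in (0:ℝ)..1, (⟪gradient 𝓛 x, v⟫ + L * ‖v‖ ^ 2 * t)
      = ⟪gradient 𝓛 x, v⟫ + L / 2 * ‖v‖ ^ 2 := by
    rw [intervalIntegral.integral_add (intervalIntegrable_const)
      ((by fun_prop : Continuous fun t : ℝ => L * ‖v‖ ^ 2 * t).intervalIntegrable 0 1),
      intervalIntegral.integral_const_mul, integral_id]
    simp; ring
  linarith [hftc ▸ hmono, hval]

/-- One-step excess-risk contraction for a stochastic gradient step under the
weak growth condition and the μ-PL condition. -/
theorem one_step_sgd_PL_contraction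
    {d : ℕ} (𝓛 : EuclideanSpace ℝ (Fin d) → ℝ) (L μ Lstar h σ η : ℝ)
    (hdiff : Differentiable ℝ 𝓛) (hL : 0 < L)
    (hsmooth : LipschitzWith (Real.toNNReal L) (gradient 𝓛))
    (hμ : 0 < μ)
    (hattained : ∃ wstar, 𝓛 wstar = Lstar ∧ ∀ v, Lstar ≤ 𝓛 v)
    (hPL : ∀ v, 2 * μ * (𝓛 v - Lstar) ≤ ‖gradient 𝓛 v‖ ^ 2)
    (w : EuclideanSpace ℝ (Fin d))
    {Ω : Type*} {mΩ : MeasurableSpace Ω} (P : Measure Ω) [IsProbabilityMeasure P]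
    (G : Ω → EuclideanSpace ℝ (Fin d)) (hG2 : MemLp G 2 P)
    (hmean : ∫ ω, G ω ∂P = gradient 𝓛 w)
    (hh : 0 ≤ h) (hσ : 0 ≤ σ)
    (hvar : ∫ ω, ‖G ω - gradient 𝓛 w‖ ^ 2 ∂P ≤ h / 2 * ‖gradient 𝓛 w‖ ^ 2 + σ ^ 2)
    (hη0 : 0 < η) (hη : η ≤ 1 / (L * (1 + h))) :
    (∫ ω, 𝓛 (w - η • G ω) ∂P) - Lstar ≤
      (1 - η * μ) * (𝓛 w - Lstar) + η ^ 2 * L * σ ^ 2 / 2 := by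
  obtain ⟨wstar, hws, hlow⟩ := hattained
  set m := gradient 𝓛 w with hm
  have hGmeas := hG2.aestronglyMeasurable
  have hGint : Integrable G P := hG2.integrable (by norm_num)
  have hinner_int : Integrable (fun ω => ⟪m, G ω⟫) P := by
    simpa using ContinuousLinearMap.integrable_comp (innerSL ℝ m) hGint
  have hnormsq_int : Integrable (fun ω => ‖G ω‖ ^ 2) P :=
    (memLp_two_iff_integrable_sq_norm hGmeas).mp hG2
  have hGm_int : Integrable (fun ω => G ω - m) P := hGint.sub (integrable_const m)
  have hGm2 : MemLp (fun ω => G ω - m) 2 P := hG2.sub (memLp_const m)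
  have hdiffsq_int : Integrable (fun ω => ‖G ω - m‖ ^ 2) P :=
    (memLp_two_iff_integrable_sq_norm hGm2.aestronglyMeasurable).mp hGm2
  have hinner2_int : Integrable (fun ω => ⟪m, G ω - m⟫) P := by
    simpa using ContinuousLinearMap.integrable_comp (innerSL ℝ m) hGm_int
  -- mean of inner
  have hinner_mean : ∫ ω, ⟪m, G ω⟫ ∂P = ‖m‖ ^ 2 := by
    rw [integral_inner hGint, hmean, real_inner_self_eq_norm_sq]
  -- cross term vanishes
  have hcross : ∫ ω, ⟪m, G ω - m⟫ ∂P = 0 := by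
    rw [integral_inner hGm_int, integral_sub hGint (integrable_const m),
      integral_const, hmean]
    simp
  -- bias-variance decomposition
  have hsplit : ∫ ω, ‖G ω‖ ^ 2 ∂P = (∫ ω, ‖G ω - m‖ ^ 2 ∂P) + ‖m‖ ^ 2 := by
    have hpt : ∀ ω, ‖G ω‖ ^ 2 = ‖G ω - m‖ ^ 2 + 2 * ⟪m, G ω - m⟫ + ‖m‖ ^ 2 := by
      intro ω
      have := norm_add_sq_real (G ω - m) m
      simp only [sub_add_cancel] at this
      rw [this, real_inner_comm]
    calc ∫ ω, ‖G ω‖ ^ 2 ∂P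
        = ∫ ω, (‖G ω - m‖ ^ 2 + 2 * ⟪m, G ω - m⟫ + ‖m‖ ^ 2) ∂P :=
          integral_congr_ae (Filter.Eventually.of_forall hpt)
      _ = (∫ ω, ‖G ω - m‖ ^ 2 ∂P) + 2 * (∫ ω, ⟪m, G ω - m⟫ ∂P) + ‖m‖ ^ 2 := by
          have ha1 : Integrable (fun ω => ‖G ω - m‖ ^ 2 + 2 * ⟪m, G ω - m⟫) P :=
            hdiffsq_int.add (hinner2_int.const_mul 2)
          have ha2 : Integrable (fun ω => 2 * ⟪m, G ω - m⟫) P := hinner2_int.const_mul 2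
          rw [integral_add ha1 (integrable_const _),
            integral_add hdiffsq_int ha2, integral_const_mul, integral_const]
          simp
      _ = (∫ ω, ‖G ω - m‖ ^ 2 ∂P) + ‖m‖ ^ 2 := by rw [hcross]; ring
  -- pointwise descent bound
  set g : Ω → ℝ := fun ω => 𝓛 w + (-η) * ⟪m, G ω⟫ + L / 2 * (η ^ 2 * ‖G ω‖ ^ 2) with hg
  have hptw : ∀ ω, 𝓛 (w - η • G ω) ≤ g ω := by
    intro ω
    have hd := descent_lemma 𝓛 L hdiff hL hsmooth w (w - η • G ω)
    have h1 : (w - η • G ω) - w = (-η) • G ω := by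
      rw [neg_smul]; abel
    rw [h1, real_inner_smul_right, norm_smul] at hd
    have h2 : (‖(-η : ℝ)‖ * ‖G ω‖) ^ 2 = η ^ 2 * ‖G ω‖ ^ 2 := by
      rw [Real.norm_eq_abs]; rw [mul_pow, sq_abs]; ring
    rw [h2] at hd
    exact hd
  have hq_int : Integrable (fun ω => L / 2 * (η ^ 2 * ‖G ω‖ ^ 2)) P := by
    exact (hnormsq_int.const_mul (L / 2 * η ^ 2)).congr
      (Filter.Eventually.of_forall fun ω => by ring)
  have hp_int : Integrable (fun ω => 𝓛 w + (-η) * ⟪m, G ω⟫) P :=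
    (integrable_const _).add (hinner_int.const_mul _)
  have hg_int : Integrable g P := hp_int.add hq_int
  -- integrability of LHS
  have hf_meas : AEStronglyMeasurable (fun ω => 𝓛 (w - η • G ω)) P :=
    hdiff.continuous.comp_aestronglyMeasurable
      (aestronglyMeasurable_const.sub (hGmeas.const_smul η))
  have hf_int : Integrable (fun ω => 𝓛 (w - η • G ω)) P := by
    apply Integrable.mono' ((integrable_const |Lstar|).add hg_int.abs) hf_meas
    filter_upwards with ω
    have h1 := hlow (w - η • G ω)
    have h2 := hptw ω
    have h3 : g ω ≤ |g ω| := le_abs_self _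
    have h4 : -|Lstar| ≤ Lstar := neg_abs_le _
    rw [Real.norm_eq_abs, abs_le]
    simp only [Pi.add_apply, Pi.abs_apply]
    have h5 : g ω ≤ |g ω| := le_abs_self _
    have h6 : 0 ≤ |g ω| := abs_nonneg _
    have h7 : (0:ℝ) ≤ |Lstar| := abs_nonneg _
    constructor <;> linarith
  have hmono : (∫ ω, 𝓛 (w - η • G ω) ∂P) ≤ ∫ ω, g ω ∂P :=
    integral_mono hf_int hg_int hptw
  have hgval : ∫ ω, g ω ∂P
      = 𝓛 w + (-η) * ‖m‖ ^ 2
        + L / 2 * (η ^ 2 * ((∫ ω, ‖G ω - m‖ ^ 2 ∂P) + ‖m‖ ^ 2)) := by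
    rw [hg, integral_add hp_int hq_int,
      integral_add (integrable_const _) (hinner_int.const_mul _),
      integral_const, integral_const_mul, integral_const_mul, integral_const_mul,
      hinner_mean, hsplit]
    simp
  -- final arithmetic
  set A := 𝓛 w - Lstar with hA
  set N := ‖m‖ ^ 2 with hN
  set V := ∫ ω, ‖G ω - m‖ ^ 2 ∂P with hV
  clear_value A N V
  have hA0 : 0 ≤ A := by rw [hA]; have := hlow w; linarith
  have hN0 : 0 ≤ N := by rw [hN]; exact sq_nonneg _
  have hV0 : 0 ≤ V := by rw [hV]; exact integral_nonneg fun ω => sq_nonneg _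
  have hPLw : 2 * μ * A ≤ N := by rw [hA, hN]; exact hPL w
  have hηL : η * (L * (1 + h)) ≤ 1 := by
    rw [le_div_iff₀ (by positivity)] at hη
    linarith
  have hvar' : V ≤ h / 2 * N + σ ^ 2 := hvar
  have key : L / 2 * (η ^ 2 * (V + N)) ≤
      L / 2 * (η ^ 2 * (h / 2 * N + σ ^ 2 + N)) := by
    refine mul_le_mul_of_nonneg_left (mul_le_mul_of_nonneg_left ?_ (sq_nonneg η))
      (by linarith : (0:ℝ) ≤ L / 2)
    linarith
  have hηL2 : L * η * (1 + h / 2) ≤ 1 := by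
    nlinarith [mul_nonneg (mul_nonneg hη0.le hL.le) hh]
  have h5 : L / 2 * (η ^ 2 * (h / 2 * N + N)) ≤ η / 2 * N := by
    have h51 : L * η * (1 + h / 2) * (η * N) ≤ 1 * (η * N) :=
      mul_le_mul_of_nonneg_right hηL2 (mul_nonneg hη0.le hN0)
    have hexp : L * η * (1 + h / 2) * (η * N)
        = 2 * (L / 2 * (η ^ 2 * (h / 2 * N + N))) := by ring
    linarith
  have h6 : η * μ * A ≤ η / 2 * N := by
    have h61 := mul_le_mul_of_nonneg_left hPLw hη0.le
    have h62 : η * (2 * μ * A) = 2 * (η * μ * A) := by ring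
    have h63 : η * N = 2 * (η / 2 * N) := by ring
    linarith
  have main : -η * N + L / 2 * (η ^ 2 * (h / 2 * N + σ ^ 2 + N))
      ≤ -(η * μ) * A + η ^ 2 * L * σ ^ 2 / 2 := by
    have hid : L / 2 * (η ^ 2 * (h / 2 * N + σ ^ 2 + N))
        = L / 2 * (η ^ 2 * (h / 2 * N + N)) + η ^ 2 * L * σ ^ 2 / 2 := by ring
    have hid2 : -(η * μ) * A = -(η * μ * A) := by ring
    linarith
  have hgoal : (∫ ω, g ω ∂P) - Lstar ≤ (1 - η * μ) * A + η ^ 2 * L * σ ^ 2 / 2 := by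
    rw [hgval]
    have hAeq : (1 - η * μ) * A = (𝓛 w - Lstar) + (-(η * μ) * A) := by rw [hA]; ring
    linarith [key, main]
  linarith [hmono]
end

section
/- (Excess risk bound for random sampling, Theorem 1(1).) Let 𝓛 : ℝ^d → ℝ be differentiable, L-smooth, and satisfy the μ-PL condition with infimum value 𝓛*. Let (W_t, G_t)_{t∈ℕ} be a stochastic-gradient process for 𝓛 with step size η, growth constant h ≥ 0 and noise level σ ≥ 0, with deterministic initial point W_0 = w_0. If 0 < η ≤ 1/(L(1 + h)) and ημ ≤ 1, then for every T ∈ ℕ, E[𝓛(W_T)] − 𝓛* ≤ exp(−ημT)(𝓛(w_0) − 𝓛*) + ηLσ²/(2μ). -/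
open MeasureTheory RealInnerProductSpace

section Helpers

variable {Ω : Type*} {mΩ : MeasurableSpace Ω} {μ : Measure Ω}

lemma sgd_integrable_inner_of_memL2 {E : Type*} [NormedAddCommGroup E] [InnerProductSpace ℝ E]
    {f g : Ω → E} (hf : MemLp f 2 μ) (hg : MemLp g 2 μ) :
    Integrable (fun ω => ⟪f ω, g ω⟫) μ := by
  have := MeasureTheory.L2.integrable_inner (𝕜 := ℝ) (hf.toLp f) (hg.toLp g)
  refine this.congr ?_
  filter_upwards [hf.coeFn_toLp, hg.coeFn_toLp] with ω h1 h2
  rw [h1, h2]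

lemma sgd_integrable_mul_of_memL2 {f g : Ω → ℝ} (hf : MemLp f 2 μ) (hg : MemLp g 2 μ) :
    Integrable (fun ω => f ω * g ω) μ := by
  simpa [RCLike.inner_apply, mul_comm] using sgd_integrable_inner_of_memL2 hf hg

lemma sgd_condExp_clm_comp {m m0 : MeasurableSpace Ω} (hm : m ≤ m0)
    {μ : Measure Ω} [IsFiniteMeasure μ]
    {E F : Type*} [NormedAddCommGroup E] [NormedSpace ℝ E] [CompleteSpace E]
    [NormedAddCommGroup F] [NormedSpace ℝ F] [CompleteSpace F]
    (T : E →L[ℝ] F) {f : Ω → E} (hf : Integrable f μ) :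
    μ[fun ω => T (f ω)|m] =ᵐ[μ] fun ω => T ((μ[f|m]) ω) := by
  haveI : SigmaFinite (μ.trim hm) := inferInstance
  refine (ae_eq_condExp_of_forall_setIntegral_eq hm (T.integrable_comp hf)
    (fun s _ _ => (T.integrable_comp integrable_condExp).integrableOn)
    (fun s hs hμs => ?_) ?_).symm
  · rw [T.integral_comp_comm (integrable_condExp.integrableOn),
      T.integral_comp_comm hf.integrableOn, setIntegral_condExp hm hf hs]
  · exact ((T.continuous.comp_stronglyMeasurable stronglyMeasurable_condExp).aestronglyMeasurable)

lemma sgd_descent_lemma {E : Type*} [NormedAddCommGroup E] [InnerProductSpace ℝ E]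
    [CompleteSpace E] {f : E → ℝ} {L : ℝ} (hL : 0 ≤ L)
    (hdiff : Differentiable ℝ f) (hlip : LipschitzWith L.toNNReal (gradient f)) (x y : E) :
    f y ≤ f x + ⟪gradient f x, y - x⟫ + L / 2 * ‖y - x‖ ^ 2 := by
  set v := y - x with hv
  have hγ : ∀ t : ℝ, HasDerivAt (fun t : ℝ => x + t • v) v t := by
    intro t
    simpa using ((hasDerivAt_id t).smul_const v).const_add x
  have hφ : ∀ t : ℝ, HasDerivAt (fun t : ℝ => f (x + t • v))
      ⟪gradient f (x + t • v), v⟫ t := by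
    intro t
    have hf := (hdiff (x + t • v)).hasGradientAt
    rw [hasGradientAt_iff_hasFDerivAt] at hf
    have := hf.comp_hasDerivAt t (hγ t)
    simpa [InnerProductSpace.toDual_apply_apply, Function.comp_def] using this
  have hgcont : Continuous (gradient f) := hlip.continuous
  have hcont : Continuous fun t : ℝ => ⟪gradient f (x + t • v), v⟫ := by
    exact (hgcont.comp (by continuity)).inner continuous_const
  have hint : IntervalIntegrable (fun t : ℝ => ⟪gradient f (x + t • v), v⟫)
      MeasureTheory.volume 0 1 := hcont.intervalIntegrable 0 1
  have key : f y - f x = ∫ t in (0:ℝ)..1, ⟪gradient f (x + t • v), v⟫ := by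
    have := intervalIntegral.integral_eq_sub_of_hasDerivAt
      (f := fun t : ℝ => f (x + t • v)) (fun t _ => hφ t) hint
    simp only [one_smul, zero_smul, add_zero] at this
    rw [this]
    congr 1 <;> simp [hv]
  have hbound : ∀ t ∈ Set.Icc (0:ℝ) 1,
      ⟪gradient f (x + t • v), v⟫ ≤ ⟪gradient f x, v⟫ + L * t * ‖v‖ ^ 2 := by
    intro t ht
    have h1 : ⟪gradient f (x + t • v), v⟫ - ⟪gradient f x, v⟫
        = ⟪gradient f (x + t • v) - gradient f x, v⟫ := by
      rw [inner_sub_left]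
    have h2 : ⟪gradient f (x + t • v) - gradient f x, v⟫ ≤ L * t * ‖v‖ ^ 2 := by
      calc ⟪gradient f (x + t • v) - gradient f x, v⟫
          ≤ ‖gradient f (x + t • v) - gradient f x‖ * ‖v‖ := real_inner_le_norm _ _
        _ ≤ (L * (t * ‖v‖)) * ‖v‖ := by
            have hnv : ‖t • v‖ = t * ‖v‖ := by
              rw [norm_smul, Real.norm_eq_abs, abs_of_nonneg ht.1]
            have := hlip.dist_le_mul (x + t • v) x
            rw [dist_eq_norm, dist_eq_norm, add_sub_cancel_left, hnv] at this
            have hc : Real.toNNReal L * (t * ‖v‖) = L * (t * ‖v‖) := by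
              rw [Real.coe_toNNReal _ hL]
            gcongr
            · exact le_trans this (le_of_eq hc)
        _ = L * t * ‖v‖ ^ 2 := by ring
    linarith
  have hmono : (∫ t in (0:ℝ)..1, ⟪gradient f (x + t • v), v⟫)
      ≤ ∫ t in (0:ℝ)..1, (⟪gradient f x, v⟫ + L * t * ‖v‖ ^ 2) := by
    refine intervalIntegral.integral_mono_on (by norm_num) hint ?_ hbound
    exact (Continuous.intervalIntegrable (by continuity) 0 1)
  have hval : (∫ t in (0:ℝ)..1, (⟪gradient f x, v⟫ + L * t * ‖v‖ ^ 2))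
      = ⟪gradient f x, v⟫ + L / 2 * ‖v‖ ^ 2 := by
    rw [intervalIntegral.integral_add (intervalIntegrable_const)
      (Continuous.intervalIntegrable (by continuity) 0 1)]
    simp only [intervalIntegral.integral_const, smul_eq_mul]
    have : (∫ t in (0:ℝ)..1, L * t * ‖v‖ ^ 2) = L / 2 * ‖v‖ ^ 2 := by
      have : (fun t : ℝ => L * t * ‖v‖ ^ 2) = fun t : ℝ => (L * ‖v‖ ^ 2) * t := by
        funext t; ring
      rw [this, intervalIntegral.integral_const_mul, integral_id]
      ring
    rw [this]; ring
  linarith [key ▸ le_trans hmono (le_of_eq hval)]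

end Helpers

set_option maxHeartbeats 2000000 in
/-- Excess risk bound for random sampling (Theorem 1(1)): SGD on an `L`-smooth
`μPL`-PL objective with weak-growth stochastic gradients satisfies a linear
convergence bound up to a noise floor. -/
theorem excess_risk_random_sampling
    {d : ℕ} (𝓛 : EuclideanSpace ℝ (Fin d) → ℝ) (L μPL Lstar h σ η : ℝ)
    (hdiff : Differentiable ℝ 𝓛) (hL : 0 < L)
    (hsmooth : LipschitzWith (Real.toNNReal L) (gradient 𝓛))
    (hμ : 0 < μPL)
    (hattained : ∃ wstar, 𝓛 wstar = Lstar ∧ ∀ v, Lstar ≤ 𝓛 v)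
    (hPL : ∀ v, 2 * μPL * (𝓛 v - Lstar) ≤ ‖gradient 𝓛 v‖ ^ 2)
    {Ω : Type*} {mΩ : MeasurableSpace Ω} (P : Measure Ω) [IsProbabilityMeasure P]
    (ℱ : Filtration ℕ mΩ)
    (W G : ℕ → Ω → EuclideanSpace ℝ (Fin d))
    (hadapted : Adapted ℱ W)
    (hGmeas : ∀ t, StronglyMeasurable[ℱ (t + 1)] (G t))
    (hG2 : ∀ t, MemLp (G t) 2 P)
    (w0 : EuclideanSpace ℝ (Fin d)) (hW0 : ∀ ω, W 0 ω = w0)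
    (hupdate : ∀ t, ∀ᵐ ω ∂P, W (t + 1) ω = W t ω - η • G t ω)
    (hmean : ∀ t, P[G t | ℱ t] =ᵐ[P] fun ω => gradient 𝓛 (W t ω))
    (hh : 0 ≤ h) (hσ : 0 ≤ σ)
    (hvar : ∀ t, ∀ᵐ ω ∂P,
      (P[(fun ω' => ‖G t ω' - gradient 𝓛 (W t ω')‖ ^ 2) | ℱ t]) ω ≤
        h / 2 * ‖gradient 𝓛 (W t ω)‖ ^ 2 + σ ^ 2)
    (hη0 : 0 < η) (hη : η ≤ 1 / (L * (1 + h))) (hημ : η * μPL ≤ 1)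
    (T : ℕ) :
    (∫ ω, 𝓛 (W T ω) ∂P) - Lstar ≤
      Real.exp (-(η * μPL) * T) * (𝓛 w0 - Lstar) + η * L * σ ^ 2 / (2 * μPL) := by
  classical
  obtain ⟨wstar, hwstar, hLB⟩ := hattained
  have hLh : 0 < L * (1 + h) := by positivity
  have hηL : η * (L * (1 + h)) ≤ 1 := by
    rw [le_div_iff₀ hLh] at hη; exact hη
  have hgcont : Continuous (gradient 𝓛) := hsmooth.continuous
  have hWm : ∀ t, StronglyMeasurable (W t) := fun t => ((hadapted t).mono (ℱ.le t) le_rfl).stronglyMeasurable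
  have hXmF : ∀ t, StronglyMeasurable[ℱ t] (fun ω => gradient 𝓛 (W t ω)) :=
    fun t => hgcont.comp_stronglyMeasurable (hadapted t).stronglyMeasurable
  have hXm : ∀ t, StronglyMeasurable (fun ω => gradient 𝓛 (W t ω)) :=
    fun t => (hXmF t).mono (ℱ.le t)
  -- W is in L²
  have hW2 : ∀ t, MemLp (W t) 2 P := by
    intro t
    induction t with
    | zero =>
      have : W 0 = fun _ => w0 := funext hW0
      rw [this]; exact memLp_const w0
    | succ t ih =>
      exact MemLp.ae_eq ((hupdate t).mono fun ω hω => hω.symm)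
        (ih.sub ((hG2 t).const_smul η))
  -- the gradient process is in L²
  have hX2 : ∀ t, MemLp (fun ω => gradient 𝓛 (W t ω)) 2 P := by
    intro t
    have hs : MemLp (fun ω => W t ω - w0) 2 P := (hW2 t).sub (memLp_const w0)
    have hn : MemLp (fun ω => L * ‖W t ω - w0‖) 2 P := hs.norm.const_mul L
    have hg : MemLp (fun ω => ‖gradient 𝓛 w0‖ + L * ‖W t ω - w0‖) 2 P :=
      (memLp_const (‖gradient 𝓛 w0‖)).add hn
    refine MemLp.of_le hg (hXm t).aestronglyMeasurable
      (Filter.Eventually.of_forall fun ω => ?_)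
    have h1 : ‖gradient 𝓛 (W t ω) - gradient 𝓛 w0‖ ≤ L * ‖W t ω - w0‖ := by
      have := hsmooth.dist_le_mul (W t ω) w0
      rwa [dist_eq_norm, dist_eq_norm, Real.coe_toNNReal _ hL.le] at this
    have h2 : ‖gradient 𝓛 (W t ω)‖ ≤ ‖gradient 𝓛 w0‖ + L * ‖W t ω - w0‖ := by
      have h3 : ‖gradient 𝓛 (W t ω)‖ ≤ ‖gradient 𝓛 w0‖ + ‖gradient 𝓛 (W t ω) - gradient 𝓛 w0‖ := by
        simpa using norm_add_le (gradient 𝓛 w0) (gradient 𝓛 (W t ω) - gradient 𝓛 w0)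
      linarith
    rw [Real.norm_eq_abs]
    exact h2.trans (le_abs_self _)
  -- integrability facts
  have hXX : ∀ t, Integrable (fun ω => ‖gradient 𝓛 (W t ω)‖ ^ 2) P := fun t =>
    (sgd_integrable_inner_of_memL2 (hX2 t) (hX2 t)).congr
      (Filter.Eventually.of_forall fun ω => real_inner_self_eq_norm_sq _)
  have hXG : ∀ t, Integrable (fun ω => ⟪gradient 𝓛 (W t ω), G t ω⟫) P :=
    fun t => sgd_integrable_inner_of_memL2 (hX2 t) (hG2 t)
  have hGG : ∀ t, Integrable (fun ω => ‖G t ω‖ ^ 2) P := fun t =>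
    (sgd_integrable_inner_of_memL2 (hG2 t) (hG2 t)).congr
      (Filter.Eventually.of_forall fun ω => real_inner_self_eq_norm_sq _)
  have hDD : ∀ t, Integrable (fun ω => ‖G t ω - gradient 𝓛 (W t ω)‖ ^ 2) P := fun t =>
    (sgd_integrable_inner_of_memL2 ((hG2 t).sub (hX2 t)) ((hG2 t).sub (hX2 t))).congr
      (Filter.Eventually.of_forall fun ω => real_inner_self_eq_norm_sq _)
  have hLW : ∀ t, Integrable (fun ω => 𝓛 (W t ω)) P := by
    intro t
    have hq : Integrable (fun ω =>
        𝓛 w0 + ⟪gradient 𝓛 w0, W t ω - w0⟫ + L / 2 * ‖W t ω - w0‖ ^ 2) P := by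
      have hWsq : Integrable (fun ω => ‖W t ω - w0‖ ^ 2) P :=
        (sgd_integrable_inner_of_memL2 ((hW2 t).sub (memLp_const w0))
          ((hW2 t).sub (memLp_const w0))).congr
          (Filter.Eventually.of_forall fun ω => real_inner_self_eq_norm_sq _)
      refine Integrable.add (Integrable.add (integrable_const _) ?_) ?_
      · exact (((hW2 t).sub (memLp_const w0)).integrable one_le_two).const_inner _
      · exact hWsq.const_mul (L / 2)
    have hgint : Integrable (fun ω =>
        |𝓛 w0 + ⟪gradient 𝓛 w0, W t ω - w0⟫ + L / 2 * ‖W t ω - w0‖ ^ 2| + |Lstar|) P :=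
      hq.abs.add (integrable_const |Lstar|)
    refine Integrable.mono' hgint
      ((hdiff.continuous.comp_stronglyMeasurable (hWm t)).aestronglyMeasurable)
      (Filter.Eventually.of_forall fun ω => ?_)
    have hub := sgd_descent_lemma hL.le hdiff hsmooth w0 (W t ω)
    have hlb := hLB (W t ω)
    rw [Real.norm_eq_abs, abs_le]
    constructor
    · have := neg_abs_le Lstar
      have := abs_nonneg (𝓛 w0 + ⟪gradient 𝓛 w0, W t ω - w0⟫ + L / 2 * ‖W t ω - w0‖ ^ 2)
      linarith
    · have := le_abs_self (𝓛 w0 + ⟪gradient 𝓛 w0, W t ω - w0⟫ + L / 2 * ‖W t ω - w0‖ ^ 2)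
      have := abs_nonneg Lstar
      linarith
  -- the key conditional expectation identity : E⟪∇,G⟫ = E‖∇‖²
  have hinner : ∀ t, (∫ ω, ⟪gradient 𝓛 (W t ω), G t ω⟫ ∂P)
      = ∫ ω, ‖gradient 𝓛 (W t ω)‖ ^ 2 ∂P := by
    intro t
    haveI : SigmaFinite (P.trim (ℱ.le t)) := inferInstance
    have hGint : Integrable (G t) P := (hG2 t).integrable one_le_two
    have hcoord : ∀ i : Fin d, (∫ ω, gradient 𝓛 (W t ω) i * G t ω i ∂P)
        = ∫ ω, gradient 𝓛 (W t ω) i * gradient 𝓛 (W t ω) i ∂P := by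
      intro i
      have hGi2 : MemLp (fun ω => G t ω i) 2 P := by
        simpa [Function.comp_def] using (EuclideanSpace.proj (𝕜 := ℝ) i).comp_memLp' (hG2 t)
      have hXi2 : MemLp (fun ω => gradient 𝓛 (W t ω) i) 2 P := by
        simpa [Function.comp_def] using (EuclideanSpace.proj (𝕜 := ℝ) i).comp_memLp' (hX2 t)
      have hXiSM : StronglyMeasurable[ℱ t] (fun ω => gradient 𝓛 (W t ω) i) :=
        (EuclideanSpace.proj (𝕜 := ℝ) i).continuous.comp_stronglyMeasurable (hXmF t)
      have hmul : Integrable (fun ω => gradient 𝓛 (W t ω) i * G t ω i) P :=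
        sgd_integrable_mul_of_memL2 hXi2 hGi2
      have hGiint : Integrable (fun ω => G t ω i) P := hGi2.integrable one_le_two
      have hmean_i : P[(fun ω => G t ω i)|ℱ t] =ᵐ[P] fun ω => gradient 𝓛 (W t ω) i := by
        have h1 := sgd_condExp_clm_comp (ℱ.le t) (EuclideanSpace.proj (𝕜 := ℝ) i) hGint
        have h2 : (fun ω => (EuclideanSpace.proj (𝕜 := ℝ) i) ((P[G t|ℱ t]) ω)) =ᵐ[P]
            fun ω => gradient 𝓛 (W t ω) i := (hmean t).mono fun ω hω => by simp [hω]
        exact (by simpa using h1 : P[(fun ω => G t ω i)|ℱ t] =ᵐ[P]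
          fun ω => (EuclideanSpace.proj (𝕜 := ℝ) i) ((P[G t|ℱ t]) ω)).trans h2
      have hpull := condExp_mul_of_stronglyMeasurable_left hXiSM
        (show Integrable ((fun ω => gradient 𝓛 (W t ω) i) * fun ω => G t ω i) P from hmul)
        hGiint
      calc (∫ ω, gradient 𝓛 (W t ω) i * G t ω i ∂P)
          = ∫ ω, (P[(fun ω => gradient 𝓛 (W t ω) i) * fun ω => G t ω i|ℱ t]) ω ∂P :=
            (integral_condExp (ℱ.le t)).symm
        _ = ∫ ω, gradient 𝓛 (W t ω) i * (P[(fun ω => G t ω i)|ℱ t]) ω ∂P :=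
            integral_congr_ae (hpull.mono fun ω hω => by simpa using hω)
        _ = ∫ ω, gradient 𝓛 (W t ω) i * gradient 𝓛 (W t ω) i ∂P :=
            integral_congr_ae ((hmean_i).mono fun ω hω => by simp only [hω])
    have hmuls : ∀ i : Fin d, Integrable (fun ω => gradient 𝓛 (W t ω) i * G t ω i) P := by
      intro i
      refine sgd_integrable_mul_of_memL2 ?_ ?_
      · simpa [Function.comp_def] using (EuclideanSpace.proj (𝕜 := ℝ) i).comp_memLp' (hX2 t)
      · simpa [Function.comp_def] using (EuclideanSpace.proj (𝕜 := ℝ) i).comp_memLp' (hG2 t)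
    have hmuls' : ∀ i : Fin d, Integrable (fun ω => gradient 𝓛 (W t ω) i * gradient 𝓛 (W t ω) i) P := by
      intro i
      refine sgd_integrable_mul_of_memL2 ?_ ?_ <;>
        simpa [Function.comp_def] using (EuclideanSpace.proj (𝕜 := ℝ) i).comp_memLp' (hX2 t)
    have e1 : (∫ ω, ⟪gradient 𝓛 (W t ω), G t ω⟫ ∂P)
        = ∑ i : Fin d, ∫ ω, gradient 𝓛 (W t ω) i * G t ω i ∂P := by
      rw [← integral_finset_sum _ fun i _ => hmuls i]
      refine integral_congr_ae (Filter.Eventually.of_forall fun ω => ?_)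
      simp only [PiLp.inner_apply, RCLike.inner_apply, conj_trivial, mul_comm]
    have e2 : (∫ ω, ‖gradient 𝓛 (W t ω)‖ ^ 2 ∂P)
        = ∑ i : Fin d, ∫ ω, gradient 𝓛 (W t ω) i * gradient 𝓛 (W t ω) i ∂P := by
      rw [← integral_finset_sum _ fun i _ => hmuls' i]
      refine integral_congr_ae (Filter.Eventually.of_forall fun ω => ?_)
      show ‖gradient 𝓛 (W t ω)‖ ^ 2
          = ∑ i : Fin d, gradient 𝓛 (W t ω) i * gradient 𝓛 (W t ω) i
      rw [← real_inner_self_eq_norm_sq]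
      simp only [PiLp.inner_apply, RCLike.inner_apply, conj_trivial]
    rw [e1, e2]
    exact Finset.sum_congr rfl fun i _ => hcoord i
  -- variance bound in expectation
  have hvarint : ∀ t, (∫ ω, ‖G t ω - gradient 𝓛 (W t ω)‖ ^ 2 ∂P)
      ≤ h / 2 * (∫ ω, ‖gradient 𝓛 (W t ω)‖ ^ 2 ∂P) + σ ^ 2 := by
    intro t
    haveI : SigmaFinite (P.trim (ℱ.le t)) := inferInstance
    calc (∫ ω, ‖G t ω - gradient 𝓛 (W t ω)‖ ^ 2 ∂P)
        = ∫ ω, (P[(fun ω' => ‖G t ω' - gradient 𝓛 (W t ω')‖ ^ 2)|ℱ t]) ω ∂P :=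
          (integral_condExp (ℱ.le t)).symm
      _ ≤ ∫ ω, (h / 2 * ‖gradient 𝓛 (W t ω)‖ ^ 2 + σ ^ 2) ∂P :=
          integral_mono_ae integrable_condExp
            (((hXX t).const_mul (h / 2)).add (integrable_const _)) (hvar t)
      _ = h / 2 * (∫ ω, ‖gradient 𝓛 (W t ω)‖ ^ 2 ∂P) + σ ^ 2 := by
          rw [integral_add (((hXX t).const_mul (h / 2))) (integrable_const _),
            integral_const_mul, integral_const]
          simp
  -- second moment of G
  have hGsq : ∀ t, (∫ ω, ‖G t ω‖ ^ 2 ∂P)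
      ≤ (1 + h / 2) * (∫ ω, ‖gradient 𝓛 (W t ω)‖ ^ 2 ∂P) + σ ^ 2 := by
    intro t
    have hid : ∀ ω, ‖G t ω‖ ^ 2 = ‖G t ω - gradient 𝓛 (W t ω)‖ ^ 2
        + 2 * ⟪gradient 𝓛 (W t ω), G t ω⟫ - ‖gradient 𝓛 (W t ω)‖ ^ 2 := by
      intro ω
      have := norm_sub_sq_real (G t ω) (gradient 𝓛 (W t ω))
      have hcomm := real_inner_comm (G t ω) (gradient 𝓛 (W t ω))
      linarith
    have e3 : (∫ ω, ‖G t ω‖ ^ 2 ∂P)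
        = (∫ ω, ‖G t ω - gradient 𝓛 (W t ω)‖ ^ 2 ∂P)
          + 2 * (∫ ω, ⟪gradient 𝓛 (W t ω), G t ω⟫ ∂P)
          - ∫ ω, ‖gradient 𝓛 (W t ω)‖ ^ 2 ∂P := by
      have hB : Integrable (fun ω => 2 * ⟪gradient 𝓛 (W t ω), G t ω⟫) P :=
        (hXG t).const_mul 2
      have hAB : Integrable (fun ω => ‖G t ω - gradient 𝓛 (W t ω)‖ ^ 2
          + 2 * ⟪gradient 𝓛 (W t ω), G t ω⟫) P := (hDD t).add hB
      rw [integral_congr_ae (Filter.Eventually.of_forall hid), integral_sub hAB (hXX t),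
        integral_add (hDD t) hB, integral_const_mul]
    rw [e3, hinner t]
    have := hvarint t
    linarith
  -- one-step recursion
  have hstep : ∀ t, (∫ ω, 𝓛 (W (t + 1) ω) ∂P) - Lstar
      ≤ (1 - η * μPL) * ((∫ ω, 𝓛 (W t ω) ∂P) - Lstar) + L * η ^ 2 * σ ^ 2 / 2 := by
    intro t
    set N := ∫ ω, ‖gradient 𝓛 (W t ω)‖ ^ 2 ∂P with hNdef
    have hNnonneg : 0 ≤ N := integral_nonneg fun ω => by positivity
    have hNge : 2 * μPL * ((∫ ω, 𝓛 (W t ω) ∂P) - Lstar) ≤ N := by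
      have hsub : Integrable (fun ω => 𝓛 (W t ω) - Lstar) P :=
        (hLW t).sub (integrable_const Lstar)
      have hsub2 : Integrable (fun ω => 2 * μPL * (𝓛 (W t ω) - Lstar)) P :=
        hsub.const_mul (2 * μPL)
      have hm := integral_mono_ae hsub2 (hXX t)
        (Filter.Eventually.of_forall fun ω => hPL (W t ω))
      rw [integral_const_mul, integral_sub (hLW t) (integrable_const Lstar),
        integral_const] at hm
      simpa using hm
    have hptw : ∀ᵐ ω ∂P, 𝓛 (W (t + 1) ω)
        ≤ 𝓛 (W t ω) - η * ⟪gradient 𝓛 (W t ω), G t ω⟫ + L * η ^ 2 / 2 * ‖G t ω‖ ^ 2 := by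
      filter_upwards [hupdate t] with ω hω
      have hd := sgd_descent_lemma hL.le hdiff hsmooth (W t ω) (W t ω - η • G t ω)
      have hyx : (W t ω - η • G t ω) - W t ω = -(η • G t ω) := by abel
      rw [hyx] at hd
      have h1 : ⟪gradient 𝓛 (W t ω), -(η • G t ω)⟫
          = -(η * ⟪gradient 𝓛 (W t ω), G t ω⟫) := by
        rw [inner_neg_right, real_inner_smul_right]
      have h2 : ‖-(η • G t ω)‖ ^ 2 = η ^ 2 * ‖G t ω‖ ^ 2 := by
        rw [norm_neg, norm_smul, Real.norm_eq_abs, mul_pow, sq_abs]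
      rw [h1, h2] at hd
      rw [hω]
      have h3 : L / 2 * (η ^ 2 * ‖G t ω‖ ^ 2) = L * η ^ 2 / 2 * ‖G t ω‖ ^ 2 := by ring
      linarith
    have hint1 : (∫ ω, 𝓛 (W (t + 1) ω) ∂P)
        ≤ ∫ ω, (𝓛 (W t ω) - η * ⟪gradient 𝓛 (W t ω), G t ω⟫
            + L * η ^ 2 / 2 * ‖G t ω‖ ^ 2) ∂P :=
      integral_mono_ae (hLW (t + 1))
        (Integrable.add ((hLW t).sub ((hXG t).const_mul η))
          ((hGG t).const_mul (L * η ^ 2 / 2))) hptw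
    have hint2 : (∫ ω, (𝓛 (W t ω) - η * ⟪gradient 𝓛 (W t ω), G t ω⟫
            + L * η ^ 2 / 2 * ‖G t ω‖ ^ 2) ∂P)
        = (∫ ω, 𝓛 (W t ω) ∂P) - η * N + L * η ^ 2 / 2 * ∫ ω, ‖G t ω‖ ^ 2 ∂P := by
      have hA : Integrable (fun ω => 𝓛 (W t ω) - η * ⟪gradient 𝓛 (W t ω), G t ω⟫) P :=
        (hLW t).sub ((hXG t).const_mul η)
      have hB : Integrable (fun ω => L * η ^ 2 / 2 * ‖G t ω‖ ^ 2) P :=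
        (hGG t).const_mul (L * η ^ 2 / 2)
      rw [integral_add hA hB, integral_sub (hLW t) ((hXG t).const_mul η),
        integral_const_mul, integral_const_mul, hinner t]
    have hG2m : L * η ^ 2 / 2 * (∫ ω, ‖G t ω‖ ^ 2 ∂P)
        ≤ L * η ^ 2 / 2 * ((1 + h / 2) * N + σ ^ 2) :=
      mul_le_mul_of_nonneg_left (hGsq t) (by positivity)
    have hcoef : L * η * (2 + h) ≤ 2 := by nlinarith [mul_nonneg (mul_nonneg hη0.le hL.le) hh]
    have h4 : (L * η ^ 2 * (2 + h) / 4 - η) * N ≤ (-(η / 2)) * N := by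
      apply mul_le_mul_of_nonneg_right _ hNnonneg
      nlinarith
    have h5 : (-(η / 2)) * N ≤ (-(η / 2)) * (2 * μPL * ((∫ ω, 𝓛 (W t ω) ∂P) - Lstar)) :=
      mul_le_mul_of_nonpos_left hNge (by linarith)
    nlinarith [hint1, hint2, hG2m, h4, h5]
  -- eventually: iterate the recursion
  have hK : 0 ≤ η * L * σ ^ 2 / (2 * μPL) := by positivity
  have h1ημ : 0 ≤ 1 - η * μPL := by linarith
  have hmain : ∀ t : ℕ, (∫ ω, 𝓛 (W t ω) ∂P) - Lstar
      ≤ (1 - η * μPL) ^ t * (𝓛 w0 - Lstar) + η * L * σ ^ 2 / (2 * μPL) := by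
    intro t
    induction t with
    | zero =>
      have hE0 : (∫ ω, 𝓛 (W 0 ω) ∂P) = 𝓛 w0 := by
        have hfun : (fun ω => 𝓛 (W 0 ω)) = fun _ => 𝓛 w0 := funext fun ω => by rw [hW0]
        rw [hfun, integral_const]; simp
      rw [hE0]; simp
      linarith
    | succ t ih =>
      have hrec := hstep t
      have h6 : (1 - η * μPL) * ((∫ ω, 𝓛 (W t ω) ∂P) - Lstar)
          ≤ (1 - η * μPL) * ((1 - η * μPL) ^ t * (𝓛 w0 - Lstar) + η * L * σ ^ 2 / (2 * μPL)) :=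
        mul_le_mul_of_nonneg_left ih h1ημ
      have hKval : η * μPL * (η * L * σ ^ 2 / (2 * μPL)) = L * η ^ 2 * σ ^ 2 / 2 := by
        have h2μ : μPL ≠ 0 := hμ.ne'
        field_simp
      have h7 : (1 - η * μPL) * ((1 - η * μPL) ^ t * (𝓛 w0 - Lstar)
            + η * L * σ ^ 2 / (2 * μPL)) + L * η ^ 2 * σ ^ 2 / 2
          = (1 - η * μPL) ^ (t + 1) * (𝓛 w0 - Lstar) + η * L * σ ^ 2 / (2 * μPL) := by
        rw [pow_succ]
        linear_combination -hKval
      linarith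
  -- final comparison with the exponential
  have hexp : (1 - η * μPL) ^ T ≤ Real.exp (-(η * μPL) * T) := by
    have h8 : 1 - η * μPL ≤ Real.exp (-(η * μPL)) := by
      have := Real.add_one_le_exp (-(η * μPL))
      linarith
    calc (1 - η * μPL) ^ T ≤ Real.exp (-(η * μPL)) ^ T := pow_le_pow_left₀ h1ημ h8 T
      _ = Real.exp (-(η * μPL) * T) := by
        rw [← Real.exp_nat_mul, mul_comm]
  have hw0 : 0 ≤ 𝓛 w0 - Lstar := by linarith [hLB w0]
  have := mul_le_mul_of_nonneg_right hexp hw0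
  linarith [hmain T]
end

section
/- (One-pass inefficiency of random sampling.) Let 𝓛 : ℝ^d → ℝ be differentiable, L-smooth, and satisfy the μ-PL condition with infimum value 𝓛*. Let (W_t, G_t)_{t∈ℕ} be a stochastic-gradient process for 𝓛 with step size η = 1/(L(1 + h)), growth constant h ≥ 0 and noise level σ ≥ 0, with deterministic initial point W_0 = w_0 and ημ ≤ 1. If the number of iterations is T = ⌈(1 + h)L/μ⌉, then E[𝓛(W_T)] − 𝓛* ≤ (𝓛(w_0) − 𝓛*)/e + σ²/(2μ(1 + h)). -/
open MeasureTheory RealInnerProductSpace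

section AuxCondexp
variable {Ω : Type*} {E : Type*} [NormedAddCommGroup E] [InnerProductSpace ℝ E] [CompleteSpace E]
variable {m mΩ : MeasurableSpace Ω} {P : Measure Ω} [IsProbabilityMeasure P]

lemma my_condExpL2_ae_eq_condexp (hm : m ≤ mΩ) {G : Ω → E}
    (hG : MemLp G 2 P) :
    ((condExpL2 E ℝ hm (hG.toLp G) : Ω →₂[P] E) : Ω → E) =ᵐ[P] P[G|m] := by
  refine ae_eq_condExp_of_forall_setIntegral_eq hm (hG.integrable one_le_two)
    (fun s hs hμs => integrableOn_condExpL2_of_measure_ne_top hm hμs.ne _)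
    (fun s hs hμs => ?_) (lpMeas.aestronglyMeasurable _)
  rw [show ∫ x in s, ((condExpL2 E ℝ hm (hG.toLp G) : Ω →₂[P] E) : Ω → E) x ∂P
        = ∫ x in s, (hG.toLp G : Ω → E) x ∂P from integral_condExpL2_eq hm (hG.toLp G) hs hμs.ne]
  exact setIntegral_congr_ae (hm s hs) ((hG.coeFn_toLp).mono fun x hx _ => hx)

lemma my_integral_inner_condexp (hm : m ≤ mΩ) {X G : Ω → E}
    (hX : MemLp X 2 P) (hXm : AEStronglyMeasurable[m] X P) (hG : MemLp G 2 P) :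
    ∫ ω, ⟪X ω, G ω⟫ ∂P = ∫ ω, ⟪X ω, (P[G|m]) ω⟫ ∂P := by
  have hXm' : AEStronglyMeasurable[m] (hX.toLp X : Ω → E) P :=
    hXm.congr hX.coeFn_toLp.symm
  have h1 : ∫ ω, ⟪X ω, G ω⟫ ∂P = ⟪hG.toLp G, hX.toLp X⟫ := by
    rw [L2.inner_def]
    refine integral_congr_ae ?_
    filter_upwards [hX.coeFn_toLp, hG.coeFn_toLp] with ω h1 h2
    rw [h1, h2, real_inner_comm]
  rw [h1, ← inner_condExpL2_eq_inner_fun hm (hG.toLp G) (hX.toLp X) hXm', L2.inner_def]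
  refine integral_congr_ae ?_
  filter_upwards [hX.coeFn_toLp, my_condExpL2_ae_eq_condexp hm hG] with ω h1 h2
  rw [h1, h2, real_inner_comm]

end AuxCondexp

section AuxAnalysis
variable {F : Type*} [NormedAddCommGroup F] [InnerProductSpace ℝ F] [CompleteSpace F]

lemma my_descent {𝓛 : F → ℝ} {L : ℝ} (hL : 0 ≤ L)
    (hdiff : Differentiable ℝ 𝓛) (hsmooth : LipschitzWith (Real.toNNReal L) (gradient 𝓛))
    (w v : F) :
    𝓛 v ≤ 𝓛 w + ⟪gradient 𝓛 w, v - w⟫ + L / 2 * ‖v - w‖ ^ 2 := by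
  set u := v - w with hu
  have hlip : ∀ x y : F, ‖gradient 𝓛 x - gradient 𝓛 y‖ ≤ L * ‖x - y‖ := by
    intro x y
    have := hsmooth.dist_le_mul x y
    rwa [dist_eq_norm, dist_eq_norm, Real.coe_toNNReal L hL] at this
  have hderiv : ∀ s : ℝ, HasDerivAt (fun s : ℝ => 𝓛 (w + s • u))
      ⟪gradient 𝓛 (w + s • u), u⟫ s := by
    intro s
    have hc : HasDerivAt (fun s : ℝ => w + s • u) u s := by
      simpa using ((hasDerivAt_id s).smul_const u).const_add w
    have hF : HasFDerivAt 𝓛 (InnerProductSpace.toDual ℝ F (gradient 𝓛 (w + s • u))) (w + s • u) :=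
      hasGradientAt_iff_hasFDerivAt.mp (hdiff _).hasGradientAt
    refine (hF.comp_hasDerivAt s hc).congr_deriv ?_
    simp
  have hcont : Continuous fun s : ℝ => ⟪gradient 𝓛 (w + s • u), u⟫ :=
    (hsmooth.continuous.comp (by continuity)).inner continuous_const
  have hftc : ∫ s in (0:ℝ)..1, ⟪gradient 𝓛 (w + s • u), u⟫ = 𝓛 v - 𝓛 w := by
    rw [intervalIntegral.integral_eq_sub_of_hasDerivAt (fun s _ => hderiv s)
      (hcont.intervalIntegrable 0 1)]
    simp [hu]
  have hmono : ∫ s in (0:ℝ)..1, ⟪gradient 𝓛 (w + s • u), u⟫ ≤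
      ∫ s in (0:ℝ)..1, (⟪gradient 𝓛 w, u⟫ + L * s * ‖u‖ ^ 2) := by
    refine intervalIntegral.integral_mono_on (by norm_num)
      (hcont.intervalIntegrable 0 1) (by apply Continuous.intervalIntegrable; continuity) ?_
    intro s hs
    have h1 : ⟪gradient 𝓛 (w + s • u), u⟫ - ⟪gradient 𝓛 w, u⟫
        = ⟪gradient 𝓛 (w + s • u) - gradient 𝓛 w, u⟫ := by rw [inner_sub_left]
    have h2 : ⟪gradient 𝓛 (w + s • u) - gradient 𝓛 w, u⟫ ≤ L * s * ‖u‖ ^ 2 := by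
      refine le_trans (real_inner_le_norm _ _) ?_
      have h3 : ‖gradient 𝓛 (w + s • u) - gradient 𝓛 w‖ ≤ L * (s * ‖u‖) := by
        have := hlip (w + s • u) w
        simpa [norm_smul, abs_of_nonneg hs.1] using this
      calc ‖gradient 𝓛 (w + s • u) - gradient 𝓛 w‖ * ‖u‖ ≤ L * (s * ‖u‖) * ‖u‖ :=
            mul_le_mul_of_nonneg_right h3 (norm_nonneg _)
        _ = L * s * ‖u‖ ^ 2 := by ring
    linarith
  have hint : ∫ s in (0:ℝ)..1, (⟪gradient 𝓛 w, u⟫ + L * s * ‖u‖ ^ 2)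
      = ⟪gradient 𝓛 w, u⟫ + L / 2 * ‖u‖ ^ 2 := by
    rw [intervalIntegral.integral_add (by apply Continuous.intervalIntegrable; continuity)
      (by apply Continuous.intervalIntegrable; continuity)]
    simp only [intervalIntegral.integral_const, smul_eq_mul]
    have : ∫ s in (0:ℝ)..1, L * s * ‖u‖ ^ 2 = L / 2 * ‖u‖ ^ 2 := by
      have : (fun s : ℝ => L * s * ‖u‖ ^ 2) = fun s : ℝ => (L * ‖u‖ ^ 2) * s := by
        funext s; ring
      rw [this, intervalIntegral.integral_const_mul, integral_id]
      ring
    rw [this]; ring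
  linarith [hftc ▸ hmono, hint ▸ hmono]

lemma my_grad_bound {𝓛 : F → ℝ} {L : ℝ} (hL : 0 ≤ L)
    (hsmooth : LipschitzWith (Real.toNNReal L) (gradient 𝓛)) (x : F) :
    ‖gradient 𝓛 x‖ ≤ ‖gradient 𝓛 0‖ + L * ‖x‖ := by
  have := hsmooth.dist_le_mul x 0
  rw [dist_eq_norm, dist_eq_norm, Real.coe_toNNReal L hL, sub_zero] at this
  calc ‖gradient 𝓛 x‖ ≤ ‖gradient 𝓛 0‖ + ‖gradient 𝓛 x - gradient 𝓛 0‖ := by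
        simpa using norm_add_le (gradient 𝓛 0) (gradient 𝓛 x - gradient 𝓛 0)
    _ ≤ ‖gradient 𝓛 0‖ + L * ‖x‖ := by linarith

lemma my_val_bound {𝓛 : F → ℝ} {L : ℝ} (hL : 0 ≤ L)
    (hsmooth : LipschitzWith (Real.toNNReal L) (gradient 𝓛))
    (hdescent : ∀ w v, 𝓛 v ≤ 𝓛 w + ⟪gradient 𝓛 w, v - w⟫ + L / 2 * ‖v - w‖ ^ 2)
    (x : F) :
    |𝓛 x| ≤ |𝓛 0| + ‖gradient 𝓛 0‖ * ‖x‖ + (3 * L / 2) * ‖x‖ ^ 2 := by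
  have h1 := hdescent 0 x
  have h2 := hdescent x 0
  simp only [sub_zero, zero_sub, norm_neg] at h1 h2
  have hi1 : ⟪gradient 𝓛 0, x⟫ ≤ ‖gradient 𝓛 0‖ * ‖x‖ := real_inner_le_norm _ _
  have hi2 : ⟪gradient 𝓛 x, -x⟫ ≤ ‖gradient 𝓛 x‖ * ‖x‖ := by
    simpa using real_inner_le_norm (gradient 𝓛 x) (-x)
  have hg := my_grad_bound hL hsmooth x
  have hb : ‖gradient 𝓛 x‖ * ‖x‖ ≤ (‖gradient 𝓛 0‖ + L * ‖x‖) * ‖x‖ :=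
    mul_le_mul_of_nonneg_right hg (norm_nonneg _)
  rw [abs_le]
  constructor
  · nlinarith [abs_nonneg (𝓛 0), le_abs_self (𝓛 0), neg_abs_le (𝓛 0), norm_nonneg x,
      sq_nonneg (‖x‖)]
  · nlinarith [le_abs_self (𝓛 0), norm_nonneg x]

end AuxAnalysis

lemma my_geom_rec {a : ℕ → ℝ} {q c : ℝ} (hq0 : 0 ≤ q) (hq1 : q < 1) (hc : 0 ≤ c)
    (hrec : ∀ t, a (t + 1) ≤ q * a t + c) (T : ℕ) :
    a T ≤ q ^ T * a 0 + c / (1 - q) := by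
  induction T with
  | zero =>
    have : 0 ≤ c / (1 - q) := div_nonneg hc (by linarith)
    simpa using by linarith
  | succ T ih =>
    have h1q : 0 < 1 - q := by linarith
    calc a (T + 1) ≤ q * a T + c := hrec T
      _ ≤ q * (q ^ T * a 0 + c / (1 - q)) + c := by nlinarith
      _ = q ^ (T + 1) * a 0 + (q * (c / (1 - q)) + c) := by ring
      _ = q ^ (T + 1) * a 0 + c / (1 - q) := by
          field_simp
          ring

set_option maxHeartbeats 1000000 in
/-- One-pass inefficiency of random sampling: after `T = ⌈(1 + h) L / μPL⌉`
SGD steps with step size `η = 1 / (L (1 + h))`, the expected excess risk is only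
reduced by a factor `1/e` up to a noise floor of `σ² / (2 μPL (1 + h))`. -/
theorem one_pass_inefficiency_random_sampling
    {d : ℕ} (𝓛 : EuclideanSpace ℝ (Fin d) → ℝ) (L μPL Lstar h σ η : ℝ)
    (hdiff : Differentiable ℝ 𝓛) (hL : 0 < L)
    (hsmooth : LipschitzWith (Real.toNNReal L) (gradient 𝓛))
    (hμ : 0 < μPL)
    (hattained : ∃ wstar, 𝓛 wstar = Lstar ∧ ∀ v, Lstar ≤ 𝓛 v)
    (hPL : ∀ v, 2 * μPL * (𝓛 v - Lstar) ≤ ‖gradient 𝓛 v‖ ^ 2)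
    {Ω : Type*} {mΩ : MeasurableSpace Ω} (P : Measure Ω) [IsProbabilityMeasure P]
    (ℱ : Filtration ℕ mΩ)
    (W G : ℕ → Ω → EuclideanSpace ℝ (Fin d))
    (hadapted : Adapted ℱ W)
    (hGmeas : ∀ t, StronglyMeasurable[ℱ (t + 1)] (G t))
    (hG2 : ∀ t, MemLp (G t) 2 P)
    (w0 : EuclideanSpace ℝ (Fin d)) (hW0 : ∀ ω, W 0 ω = w0)
    (hupdate : ∀ t, ∀ᵐ ω ∂P, W (t + 1) ω = W t ω - η • G t ω)
    (hmean : ∀ t, P[G t | ℱ t] =ᵐ[P] fun ω => gradient 𝓛 (W t ω))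
    (hh : 0 ≤ h) (hσ : 0 ≤ σ)
    (hvar : ∀ t, ∀ᵐ ω ∂P,
      (P[(fun ω' => ‖G t ω' - gradient 𝓛 (W t ω')‖ ^ 2) | ℱ t]) ω ≤
        h / 2 * ‖gradient 𝓛 (W t ω)‖ ^ 2 + σ ^ 2)
    (hηdef : η = 1 / (L * (1 + h))) (hημ : η * μPL ≤ 1)
    (T : ℕ) (hT : T = ⌈(1 + h) * L / μPL⌉₊) :
    (∫ ω, 𝓛 (W T ω) ∂P) - Lstar ≤
      (𝓛 w0 - Lstar) / Real.exp 1 + σ ^ 2 / (2 * μPL * (1 + h)) := by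
  obtain ⟨wstar, hstar, hlow⟩ := hattained
  have hL0 : (0:ℝ) ≤ L := hL.le
  have h1h : (0:ℝ) < 1 + h := by linarith
  have hη0 : 0 < η := by rw [hηdef]; positivity
  have hημ0 : 0 < η * μPL := mul_pos hη0 hμ
  have hgc : Continuous (gradient 𝓛) := hsmooth.continuous
  have hdescent : ∀ w v, 𝓛 v ≤ 𝓛 w + ⟪gradient 𝓛 w, v - w⟫ + L / 2 * ‖v - w‖ ^ 2 :=
    my_descent hL0 hdiff hsmooth
  -- measurability and integrability facts
  have hWm : ∀ t, AEStronglyMeasurable (W t) P :=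
    fun t => ((hadapted t).mono (ℱ.le t) le_rfl).aestronglyMeasurable
  have hW2 : ∀ t, MemLp (W t) 2 P := by
    intro t
    induction t with
    | zero =>
      exact (memLp_const w0).ae_eq (Filter.Eventually.of_forall fun ω => (hW0 ω).symm)
    | succ t ih =>
      have hsub : MemLp (fun ω => W t ω - η • G t ω) 2 P := ih.sub ((hG2 t).const_smul η)
      exact hsub.ae_eq ((hupdate t).mono fun ω hω => hω.symm)
  have hgW2 : ∀ t, MemLp (fun ω => gradient 𝓛 (W t ω)) 2 P := by
    intro t
    have hmeas : AEStronglyMeasurable (fun ω => gradient 𝓛 (W t ω)) P :=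
      hgc.comp_aestronglyMeasurable (hWm t)
    have hbound : MemLp (fun ω => ‖gradient 𝓛 (0 : EuclideanSpace ℝ (Fin d))‖ + L * ‖W t ω‖) 2 P :=
      (memLp_const (‖gradient 𝓛 (0 : EuclideanSpace ℝ (Fin d))‖)).add (((hW2 t).norm).const_mul L)
    refine hbound.of_le hmeas (Filter.Eventually.of_forall fun ω => ?_)
    have h1 := my_grad_bound hL0 hsmooth (W t ω)
    have h2 : 0 ≤ ‖gradient 𝓛 (0 : EuclideanSpace ℝ (Fin d))‖ + L * ‖W t ω‖ := by positivity
    rw [Real.norm_eq_abs, abs_of_nonneg h2]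
    exact h1
  have hnormW2 : ∀ t, Integrable (fun ω => ‖W t ω‖ ^ 2) P := fun t => (hW2 t).norm.integrable_sq
  have hnormW1 : ∀ t, Integrable (fun ω => ‖W t ω‖) P :=
    fun t => ((hW2 t).norm).integrable one_le_two
  have h𝓛int : ∀ t, Integrable (fun ω => 𝓛 (W t ω)) P := by
    intro t
    have hmeas : AEStronglyMeasurable (fun ω => 𝓛 (W t ω)) P :=
      (hdiff.continuous).comp_aestronglyMeasurable (hWm t)
    have hmaj : Integrable (fun ω => |𝓛 (0 : EuclideanSpace ℝ (Fin d))| +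
        ‖gradient 𝓛 (0 : EuclideanSpace ℝ (Fin d))‖ * ‖W t ω‖ + (3 * L / 2) * ‖W t ω‖ ^ 2) P :=
      ((integrable_const _).add ((hnormW1 t).const_mul _)).add ((hnormW2 t).const_mul _)
    refine hmaj.mono' hmeas (Filter.Eventually.of_forall fun ω => ?_)
    rw [Real.norm_eq_abs]
    exact my_val_bound hL0 hsmooth hdescent (W t ω)
  have hgn2 : ∀ t, Integrable (fun ω => ‖gradient 𝓛 (W t ω)‖ ^ 2) P :=
    fun t => (hgW2 t).norm.integrable_sq
  have hGn2 : ∀ t, Integrable (fun ω => ‖G t ω‖ ^ 2) P := fun t => (hG2 t).norm.integrable_sq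
  have hD2 : ∀ t, MemLp (fun ω => G t ω - gradient 𝓛 (W t ω)) 2 P := by
    intro t
    have := (hG2 t).sub (hgW2 t)
    exact this.ae_eq (Filter.Eventually.of_forall fun ω => rfl)
  have hDn2 : ∀ t, Integrable (fun ω => ‖G t ω - gradient 𝓛 (W t ω)‖ ^ 2) P :=
    fun t => (hD2 t).norm.integrable_sq
  have hinner_int : ∀ t, Integrable (fun ω => ⟪gradient 𝓛 (W t ω), G t ω⟫) P := by
    intro t
    have hI := L2.integrable_inner (𝕜 := ℝ) ((hgW2 t).toLp _) ((hG2 t).toLp _)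
    refine hI.congr ?_
    filter_upwards [(hgW2 t).coeFn_toLp, (hG2 t).coeFn_toLp] with ω h1 h2
    rw [h1, h2]
  have hXmeas' : ∀ t, AEStronglyMeasurable[ℱ t] (fun ω => gradient 𝓛 (W t ω)) P :=
    fun t => (hgc.comp_stronglyMeasurable (hadapted t).stronglyMeasurable).aestronglyMeasurable
  -- key expectation identities
  have E1 : ∀ t, ∫ ω, ⟪gradient 𝓛 (W t ω), G t ω⟫ ∂P
      = ∫ ω, ‖gradient 𝓛 (W t ω)‖ ^ 2 ∂P := by
    intro t
    rw [my_integral_inner_condexp (ℱ.le t) (hgW2 t) (hXmeas' t) (hG2 t)]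
    refine integral_congr_ae ?_
    filter_upwards [hmean t] with ω hω
    rw [hω, real_inner_self_eq_norm_sq]
  have E2 : ∀ t, ∫ ω, ‖G t ω - gradient 𝓛 (W t ω)‖ ^ 2 ∂P ≤
      h / 2 * (∫ ω, ‖gradient 𝓛 (W t ω)‖ ^ 2 ∂P) + σ ^ 2 := by
    intro t
    have h1 : ∫ ω, ‖G t ω - gradient 𝓛 (W t ω)‖ ^ 2 ∂P
        = ∫ ω, (P[(fun ω' => ‖G t ω' - gradient 𝓛 (W t ω')‖ ^ 2)|ℱ t]) ω ∂P :=
      (integral_condExp (ℱ.le t)).symm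
    rw [h1]
    have h2 : ∫ ω, (h / 2 * ‖gradient 𝓛 (W t ω)‖ ^ 2 + σ ^ 2) ∂P
        = h / 2 * (∫ ω, ‖gradient 𝓛 (W t ω)‖ ^ 2 ∂P) + σ ^ 2 := by
      rw [integral_add ((hgn2 t).const_mul _) (integrable_const _), integral_const_mul]
      simp [measure_univ]
    rw [← h2]
    exact integral_mono_ae integrable_condExp
      (((hgn2 t).const_mul _).add (integrable_const _)) (hvar t)
  have E3 : ∀ t, ∫ ω, ‖G t ω‖ ^ 2 ∂P ≤
      (1 + h / 2) * (∫ ω, ‖gradient 𝓛 (W t ω)‖ ^ 2 ∂P) + σ ^ 2 := by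
    intro t
    have hexp : (fun ω => ‖G t ω‖ ^ 2) = fun ω =>
        (‖G t ω - gradient 𝓛 (W t ω)‖ ^ 2 + 2 * ⟪gradient 𝓛 (W t ω), G t ω⟫)
          - ‖gradient 𝓛 (W t ω)‖ ^ 2 := by
      funext ω
      have := norm_sub_sq_real (G t ω) (gradient 𝓛 (W t ω))
      have hcomm : ⟪G t ω, gradient 𝓛 (W t ω)⟫ = ⟪gradient 𝓛 (W t ω), G t ω⟫ :=
        real_inner_comm _ _
      linarith
    have h4 : ∫ ω, ‖G t ω‖ ^ 2 ∂P
        = ((∫ ω, ‖G t ω - gradient 𝓛 (W t ω)‖ ^ 2 ∂P)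
            + 2 * (∫ ω, ⟪gradient 𝓛 (W t ω), G t ω⟫ ∂P))
          - ∫ ω, ‖gradient 𝓛 (W t ω)‖ ^ 2 ∂P := by
      have hint1 : Integrable (fun ω => ‖G t ω - gradient 𝓛 (W t ω)‖ ^ 2
          + 2 * ⟪gradient 𝓛 (W t ω), G t ω⟫) P :=
        (hDn2 t).add ((hinner_int t).const_mul 2)
      rw [hexp, integral_sub hint1 (hgn2 t),
        integral_add (hDn2 t) ((hinner_int t).const_mul 2), integral_const_mul]
    rw [h4, E1 t]
    have := E2 t
    linarith
  -- the one-step recursion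
  have key : ∀ t, (∫ ω, 𝓛 (W (t + 1) ω) ∂P) - Lstar ≤
      (1 - η * μPL) * ((∫ ω, 𝓛 (W t ω) ∂P) - Lstar) + L * η ^ 2 * σ ^ 2 / 2 := by
    intro t
    have hIt0 : 0 ≤ ∫ ω, ‖gradient 𝓛 (W t ω)‖ ^ 2 ∂P :=
      integral_nonneg fun ω => by positivity
    have hstep : ∫ ω, 𝓛 (W (t + 1) ω) ∂P ≤
        ∫ ω, (𝓛 (W t ω) - η * ⟪gradient 𝓛 (W t ω), G t ω⟫
          + L * η ^ 2 / 2 * ‖G t ω‖ ^ 2) ∂P := by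
      have hint3 : Integrable (fun ω => 𝓛 (W t ω) - η * ⟪gradient 𝓛 (W t ω), G t ω⟫
          + L * η ^ 2 / 2 * ‖G t ω‖ ^ 2) P :=
        ((h𝓛int t).sub ((hinner_int t).const_mul η)).add ((hGn2 t).const_mul _)
      refine integral_mono_ae (h𝓛int (t + 1)) hint3 ?_
      filter_upwards [hupdate t] with ω hω
      have hdes := hdescent (W t ω) (W (t + 1) ω)
      rw [hω] at hdes
      have hv : W t ω - η • G t ω - W t ω = -(η • G t ω) := by abel
      rw [hv] at hdes
      have h1 : ⟪gradient 𝓛 (W t ω), -(η • G t ω)⟫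
          = -(η * ⟪gradient 𝓛 (W t ω), G t ω⟫) := by
        rw [inner_neg_right, real_inner_smul_right]
      have h2 : ‖-(η • G t ω)‖ ^ 2 = η ^ 2 * ‖G t ω‖ ^ 2 := by
        rw [norm_neg, norm_smul, mul_pow, Real.norm_eq_abs, sq_abs]
      rw [h1, h2] at hdes
      rw [hω]
      nlinarith [hdes]
    have hrhs : ∫ ω, (𝓛 (W t ω) - η * ⟪gradient 𝓛 (W t ω), G t ω⟫
          + L * η ^ 2 / 2 * ‖G t ω‖ ^ 2) ∂P
        = (∫ ω, 𝓛 (W t ω) ∂P) - η * (∫ ω, ⟪gradient 𝓛 (W t ω), G t ω⟫ ∂P)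
          + L * η ^ 2 / 2 * (∫ ω, ‖G t ω‖ ^ 2 ∂P) := by
      have hint2 : Integrable (fun ω => 𝓛 (W t ω)
          - η * ⟪gradient 𝓛 (W t ω), G t ω⟫) P :=
        (h𝓛int t).sub ((hinner_int t).const_mul η)
      rw [integral_add hint2 ((hGn2 t).const_mul _),
        integral_sub (h𝓛int t) ((hinner_int t).const_mul η), integral_const_mul,
        integral_const_mul]
    have hPLint : 2 * μPL * ((∫ ω, 𝓛 (W t ω) ∂P) - Lstar) ≤
        ∫ ω, ‖gradient 𝓛 (W t ω)‖ ^ 2 ∂P := by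
      have hmono : ∫ ω, 2 * μPL * (𝓛 (W t ω) - Lstar) ∂P ≤
          ∫ ω, ‖gradient 𝓛 (W t ω)‖ ^ 2 ∂P :=
        integral_mono_ae (((h𝓛int t).sub (integrable_const _)).const_mul _) (hgn2 t)
          (Filter.Eventually.of_forall fun ω => hPL _)
      have hcalc : ∫ ω, 2 * μPL * (𝓛 (W t ω) - Lstar) ∂P
          = 2 * μPL * ((∫ ω, 𝓛 (W t ω) ∂P) - Lstar) := by
        rw [integral_const_mul, integral_sub (h𝓛int t) (integrable_const _)]
        simp [measure_univ]
      linarith [hcalc ▸ hmono]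
    -- arithmetic
    have hLη : L * η = 1 / (1 + h) := by
      rw [hηdef]; field_simp
    have hc1 : L * η ^ 2 / 2 * (1 + h / 2) ≤ η / 2 := by
      have heq : L * η ^ 2 / 2 * (1 + h / 2) = (L * η) * (η * (1 + h / 2)) / 2 := by ring
      rw [heq, hLη]
      rw [div_le_div_iff₀ (by norm_num : (0:ℝ) < 2) (by norm_num : (0:ℝ) < 2)]
      rw [div_mul_eq_mul_div, one_mul, div_mul_eq_mul_div, div_le_iff₀ h1h]
      nlinarith [hη0.le, hh]
    have hLη2 : (0:ℝ) ≤ L * η ^ 2 / 2 := by positivity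
    rw [hrhs, E1 t] at hstep
    have hmul : L * η ^ 2 / 2 * (∫ ω, ‖G t ω‖ ^ 2 ∂P) ≤
        L * η ^ 2 / 2 * ((1 + h / 2) * (∫ ω, ‖gradient 𝓛 (W t ω)‖ ^ 2 ∂P) + σ ^ 2) :=
      mul_le_mul_of_nonneg_left (E3 t) hLη2
    have hcoef : L * η ^ 2 / 2 * (1 + h / 2) * (∫ ω, ‖gradient 𝓛 (W t ω)‖ ^ 2 ∂P) ≤
        η / 2 * (∫ ω, ‖gradient 𝓛 (W t ω)‖ ^ 2 ∂P) :=
      mul_le_mul_of_nonneg_right hc1 hIt0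
    have hPL2 : η / 2 * (2 * μPL * ((∫ ω, 𝓛 (W t ω) ∂P) - Lstar)) ≤
        η / 2 * (∫ ω, ‖gradient 𝓛 (W t ω)‖ ^ 2 ∂P) :=
      mul_le_mul_of_nonneg_left hPLint (by positivity)
    linarith [hstep, hmul, hcoef, hPL2]
  -- apply the recursion
  have hLη : L * η = 1 / (1 + h) := by
    rw [hηdef]; field_simp
  have ha : ∀ t : ℕ, (fun t : ℕ => (∫ ω, 𝓛 (W t ω) ∂P) - Lstar) t = (∫ ω, 𝓛 (W t ω) ∂P) - Lstar := fun _ => rfl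
  have hq0 : 0 ≤ 1 - η * μPL := by linarith
  have hq1 : 1 - η * μPL < 1 := by linarith
  have hc0 : 0 ≤ L * η ^ 2 * σ ^ 2 / 2 := by positivity
  have hrecT := my_geom_rec (a := fun t : ℕ => (∫ ω, 𝓛 (W t ω) ∂P) - Lstar) hq0 hq1 hc0 key T
  have h1mq : 1 - (1 - η * μPL) = η * μPL := by ring
  rw [h1mq] at hrecT
  have ha0 : (∫ ω, 𝓛 (W 0 ω) ∂P) - Lstar = 𝓛 w0 - Lstar := by
    have hfun : (fun ω => 𝓛 (W 0 ω)) = fun _ => 𝓛 w0 := funext fun ω => by rw [hW0 ω]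
    rw [hfun, integral_const]
    simp [measure_univ]
  have ha0nn : (0:ℝ) ≤ 𝓛 w0 - Lstar := by linarith [hlow w0]
  rw [ha0] at hrecT
  -- geometric factor bound
  have hTge : ((1 + h) * L / μPL : ℝ) ≤ (T : ℝ) := by
    rw [hT]; exact Nat.le_ceil _
  have hημT : 1 ≤ η * μPL * T := by
    have h1 : η * μPL * ((1 + h) * L / μPL) = 1 := by
      rw [hηdef]; field_simp
    calc (1:ℝ) = η * μPL * ((1 + h) * L / μPL) := h1.symm
      _ ≤ η * μPL * T := mul_le_mul_of_nonneg_left hTge hημ0.le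
  have hqe : 1 - η * μPL ≤ Real.exp (-(η * μPL)) := by
    have := Real.add_one_le_exp (-(η * μPL)); linarith
  have hpow : (1 - η * μPL) ^ T ≤ (Real.exp 1)⁻¹ := by
    calc (1 - η * μPL) ^ T ≤ Real.exp (-(η * μPL)) ^ T := pow_le_pow_left₀ hq0 hqe T
      _ = Real.exp ((T : ℝ) * (-(η * μPL))) := (Real.exp_nat_mul _ T).symm
      _ ≤ Real.exp (-1) := Real.exp_le_exp.mpr (by linarith [hημT])
      _ = (Real.exp 1)⁻¹ := by rw [Real.exp_neg]
  have hgeom : (1 - η * μPL) ^ T * (𝓛 w0 - Lstar) ≤ (𝓛 w0 - Lstar) / Real.exp 1 := by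
    calc (1 - η * μPL) ^ T * (𝓛 w0 - Lstar) ≤ (Real.exp 1)⁻¹ * (𝓛 w0 - Lstar) :=
          mul_le_mul_of_nonneg_right hpow ha0nn
      _ = (𝓛 w0 - Lstar) / Real.exp 1 := by ring
  have hnoise : L * η ^ 2 * σ ^ 2 / 2 / (η * μPL) ≤ σ ^ 2 / (2 * μPL * (1 + h)) := by
    have heq : L * η ^ 2 * σ ^ 2 / 2 / (η * μPL) = (L * η) * (σ ^ 2 / (2 * μPL)) := by
      field_simp
    rw [heq, hLη]
    rw [div_mul_eq_mul_div, one_mul, div_div]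
  linarith [hrecT, hgeom, hnoise]
end

section
/- (Gradual sampling with Δ̂ > 0: O(p²Δ̂²/μ) bound.) Let F_s, F_l : ℝ^d → ℝ be differentiable, let p ∈ (0,1], set 𝓛 = (1 − p)F_s + pF_l, and suppose 𝓛 is L-smooth, satisfies the μ-PL condition with infimum value 𝓛*, and ‖∇F_s(w) − ∇F_l(w)‖ ≤ Δ̂ for all w ∈ ℝ^d, with Δ̂ > 0. Let D₀ = 𝓛(w_0) − 𝓛* > 0, assume 4μD₀ ≥ p²Δ̂², set η₁ = min(1/L, p²Δ̂²/(2σ²L)) with σ > 0, assume η₁μ ≤ 1, and let n' ∈ ℕ satisfy n' ≥ (1/(η₁μ))·log(4μD₀/(p²Δ̂²)). Let (W_t) be adapted to a filtration (𝓕_t) with deterministic initial point W_0 = w_0, and let G_t be square-integrable, 𝓕_{t+1}-measurable ℝ^d-valued random vectors with, almost surely, W_{t+1} = W_t − η₁G_t, E[G_t | 𝓕_t] = ∇F_s(W_t), and E[‖G_t − ∇F_s(W_t)‖² | 𝓕_t] ≤ σ². Then E[𝓛(W_{n'})] − 𝓛* ≤ p²Δ̂²/μ. -/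
open MeasureTheory RealInnerProductSpace
set_option maxHeartbeats 1000000

theorem integrable_inner_of_memL2 {α : Type*} [MeasurableSpace α] {μ : Measure α}
    {E : Type*} [NormedAddCommGroup E] [InnerProductSpace ℝ E] {f g : α → E}
    (hf : MemLp f 2 μ) (hg : MemLp g 2 μ) :
    Integrable (fun ω => ⟪f ω, g ω⟫) μ := by
  have h := L2.integrable_inner (𝕜 := ℝ) (hf.toLp f) (hg.toLp g)
  refine h.congr ?_
  filter_upwards [hf.coeFn_toLp, hg.coeFn_toLp] with ω h1 h2
  rw [h1, h2]

theorem condexp_clm_comm {α : Type*} {m m0 : MeasurableSpace α} {μ : Measure α}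
    [IsFiniteMeasure μ] (hm : m ≤ m0)
    {E F : Type*} [NormedAddCommGroup E] [NormedSpace ℝ E] [CompleteSpace E]
    [NormedAddCommGroup F] [NormedSpace ℝ F] [CompleteSpace F]
    (T : E →L[ℝ] F) {f : α → E} (hf : Integrable f μ) :
    (fun ω => T ((μ[f|m]) ω)) =ᵐ[μ] μ[fun ω => T (f ω)|m] := by
  refine ae_eq_condExp_of_forall_setIntegral_eq hm (T.integrable_comp hf) ?_ ?_ ?_
  · exact fun s _ _ => (T.integrable_comp integrable_condExp).integrableOn
  · intro s hs _
    rw [ContinuousLinearMap.integral_comp_comm T integrable_condExp.integrableOn,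
      setIntegral_condExp hm hf hs,
      ← ContinuousLinearMap.integral_comp_comm T hf.integrableOn]
  · exact T.continuous.comp_aestronglyMeasurable
      stronglyMeasurable_condExp.aestronglyMeasurable

theorem integral_inner_condexp {d : ℕ} {α : Type*} {m m0 : MeasurableSpace α} {μ : Measure α}
    [IsProbabilityMeasure μ] (hm : m ≤ m0) {c g : α → EuclideanSpace ℝ (Fin d)}
    (hcm : AEStronglyMeasurable[m] c μ) (hc2 : MemLp c 2 μ) (hg2 : MemLp g 2 μ) :
    ∫ ω, ⟪c ω, g ω⟫ ∂μ = ∫ ω, ⟪c ω, (μ[g|m]) ω⟫ ∂μ := by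
  have hgi : Integrable g μ := hg2.integrable one_le_two
  have hci : ∀ i : Fin d, AEStronglyMeasurable[m] (fun ω => c ω i) μ := fun i =>
    (EuclideanSpace.proj (𝕜 := ℝ) i).continuous.comp_aestronglyMeasurable hcm
  have hc2i : ∀ i : Fin d, MemLp (fun ω => c ω i) 2 μ := fun i =>
    (EuclideanSpace.proj (𝕜 := ℝ) i).comp_memLp' hc2
  have hg2i : ∀ i : Fin d, MemLp (fun ω => g ω i) 2 μ := fun i =>
    (EuclideanSpace.proj (𝕜 := ℝ) i).comp_memLp' hg2
  have hgii : ∀ i : Fin d, Integrable (fun ω => g ω i) μ := fun i => (hg2i i).integrable one_le_two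
  have hmul : ∀ i : Fin d, Integrable (fun ω => c ω i * g ω i) μ := by
    intro i
    have := integrable_inner_of_memL2 (hc2i i) (hg2i i)
    simpa [RCLike.inner_apply, starRingEnd_apply, mul_comm] using this
  have hpull : ∀ i : Fin d,
      ∫ ω, c ω i * g ω i ∂μ = ∫ ω, c ω i * (μ[g|m]) ω i ∂μ := by
    intro i
    have h1 : μ[(fun ω => c ω i * g ω i)|m] =ᵐ[μ] fun ω => c ω i * (μ[(fun ω => g ω i)|m]) ω :=
      condExp_mul_of_aestronglyMeasurable_left (hci i) (hmul i) (hgii i)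
    have h2 : (fun ω => (μ[g|m]) ω i) =ᵐ[μ]
        μ[(fun ω => g ω i)|m] := condexp_clm_comm hm (EuclideanSpace.proj (𝕜 := ℝ) i) hgi
    rw [← integral_condExp hm (f := fun ω => c ω i * g ω i)]
    refine integral_congr_ae (h1.trans ?_)
    filter_upwards [h2] with ω hω
    show c ω i * (μ[(fun ω => g ω i)|m]) ω = c ω i * (μ[g|m]) ω i
    rw [← hω]
  have hmulY : ∀ i : Fin d, Integrable (fun ω => c ω i * (μ[g|m]) ω i) μ := by
    intro i
    have h1 : μ[(fun ω => c ω i * g ω i)|m] =ᵐ[μ] fun ω => c ω i * (μ[(fun ω => g ω i)|m]) ω :=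
      condExp_mul_of_aestronglyMeasurable_left (hci i) (hmul i) (hgii i)
    have h2 : (fun ω => (μ[g|m]) ω i) =ᵐ[μ]
        μ[(fun ω => g ω i)|m] := condexp_clm_comm hm (EuclideanSpace.proj (𝕜 := ℝ) i) hgi
    refine (integrable_condExp (f := fun ω => c ω i * g ω i)).congr (h1.trans ?_)
    filter_upwards [h2] with ω hω
    show c ω i * (μ[(fun ω => g ω i)|m]) ω = c ω i * (μ[g|m]) ω i
    rw [← hω]
  calc ∫ ω, ⟪c ω, g ω⟫ ∂μ = ∫ ω, ∑ i, c ω i * g ω i ∂μ := by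
        refine integral_congr_ae (Filter.Eventually.of_forall fun ω => ?_)
        simp [PiLp.inner_apply, RCLike.inner_apply, starRingEnd_apply, mul_comm]
    _ = ∑ i, ∫ ω, c ω i * g ω i ∂μ := integral_finset_sum _ fun i _ => hmul i
    _ = ∑ i, ∫ ω, c ω i * (μ[g|m]) ω i ∂μ := by exact Finset.sum_congr rfl fun i _ => hpull i
    _ = ∫ ω, ∑ i, c ω i * (μ[g|m]) ω i ∂μ := (integral_finset_sum _ fun i _ => hmulY i).symm
    _ = ∫ ω, ⟪c ω, (μ[g|m]) ω⟫ ∂μ := by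
        refine integral_congr_ae (Filter.Eventually.of_forall fun ω => ?_)
        simp [PiLp.inner_apply, RCLike.inner_apply, starRingEnd_apply, mul_comm]

theorem smooth_descent {E : Type*} [NormedAddCommGroup E] [InnerProductSpace ℝ E]
    [CompleteSpace E] {f : E → ℝ} (hf : Differentiable ℝ f) {L : ℝ} (hL : 0 ≤ L)
    (hlip : LipschitzWith L.toNNReal (gradient f)) (u v : E) :
    f v ≤ f u + ⟪gradient f u, v - u⟫ + L / 2 * ‖v - u‖ ^ 2 := by
  set w := v - u with hw
  have key : ∀ s : ℝ, HasDerivAt (fun s : ℝ => f (u + s • w))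
      ⟪gradient f (u + s • w), w⟫ s := by
    intro s
    have h1 : HasFDerivAt f ((InnerProductSpace.toDual ℝ E) (gradient f (u + s • w)))
        (u + s • w) := hasGradientAt_iff_hasFDerivAt.mp (hf _).hasGradientAt
    have h2 : HasDerivAt (fun s : ℝ => u + s • w) w s := by
      simpa using ((hasDerivAt_id s).smul_const w).const_add u
    have e : (InnerProductSpace.toDual ℝ E) (gradient f (u + s • w)) w
        = ⟪gradient f (u + s • w), w⟫ := InnerProductSpace.toDual_apply_apply
    rw [← e]
    exact h1.comp_hasDerivAt s h2
  have cont : Continuous fun s : ℝ => ⟪gradient f (u + s • w), w⟫ := by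
    have h1 : Continuous fun s : ℝ => gradient f (u + s • w) :=
      hlip.continuous.comp (by continuity)
    exact h1.inner continuous_const
  have hFTC : ∫ s in (0:ℝ)..1, ⟪gradient f (u + s • w), w⟫ = f (u + (1:ℝ) • w) - f (u + (0:ℝ) • w) :=
    intervalIntegral.integral_eq_sub_of_hasDerivAt (fun s _ => key s)
      (cont.intervalIntegrable 0 1)
  have hbound : ∀ s ∈ Set.Icc (0:ℝ) 1,
      ⟪gradient f (u + s • w), w⟫ ≤ ⟪gradient f u, w⟫ + L * ‖w‖ ^ 2 * s := by
    intro s hs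
    have h3 : ⟪gradient f (u + s • w), w⟫ - ⟪gradient f u, w⟫
        = ⟪gradient f (u + s • w) - gradient f u, w⟫ := (inner_sub_left _ _ _).symm
    have h4 : ‖gradient f (u + s • w) - gradient f u‖ ≤ L * s * ‖w‖ := by
      have := hlip.dist_le_mul (u + s • w) u
      rw [dist_eq_norm] at this
      calc ‖gradient f (u + s • w) - gradient f u‖ ≤ ↑L.toNNReal * ‖s • w‖ := by
            simpa [dist_eq_norm] using this
        _ ≤ L * s * ‖w‖ := by
            rw [norm_smul]
            simp only [Real.norm_eq_abs, abs_of_nonneg hs.1]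
            rw [Real.coe_toNNReal _ hL, mul_assoc]
    have h5 : ⟪gradient f (u + s • w) - gradient f u, w⟫ ≤ L * s * ‖w‖ * ‖w‖ :=
      (real_inner_le_norm _ _).trans (by
        exact mul_le_mul_of_nonneg_right h4 (norm_nonneg _))
    nlinarith [sq_nonneg ‖w‖]
  have hint : ∫ s in (0:ℝ)..1, (⟪gradient f u, w⟫ + L * ‖w‖ ^ 2 * s)
      = ⟪gradient f u, w⟫ + L / 2 * ‖w‖ ^ 2 := by
    have h1 : IntervalIntegrable (fun s : ℝ => L * ‖w‖ ^ 2 * s) MeasureTheory.volume 0 1 :=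
      (by fun_prop : Continuous fun s : ℝ => L * ‖w‖ ^ 2 * s).intervalIntegrable 0 1
    rw [intervalIntegral.integral_add intervalIntegrable_const h1,
      intervalIntegral.integral_const_mul, integral_id]
    simp only [intervalIntegral.integral_const, smul_eq_mul, sub_zero]
    ring
  have hmono : ∫ s in (0:ℝ)..1, ⟪gradient f (u + s • w), w⟫
      ≤ ∫ s in (0:ℝ)..1, (⟪gradient f u, w⟫ + L * ‖w‖ ^ 2 * s) := by
    refine intervalIntegral.integral_mono_on (by norm_num) (cont.intervalIntegrable 0 1)
      (intervalIntegrable_const.add ((by fun_prop : Continuous fun s : ℝ => L * ‖w‖ ^ 2 * s).intervalIntegrable 0 1)) hbound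
  have : f v - f u ≤ ⟪gradient f u, w⟫ + L / 2 * ‖w‖ ^ 2 := by
    have := hmono.trans_eq hint
    rw [hFTC] at this
    simpa [hw] using this
  linarith

theorem gradient_combo {E : Type*} [NormedAddCommGroup E] [InnerProductSpace ℝ E]
    [CompleteSpace E] {Fs Fl : E → ℝ} (hFs : Differentiable ℝ Fs) (hFl : Differentiable ℝ Fl)
    (p : ℝ) (x : E) :
    gradient (fun v => (1 - p) * Fs v + p * Fl v) x
      = (1 - p) • gradient Fs x + p • gradient Fl x := by
  have h1 : HasFDerivAt Fs ((InnerProductSpace.toDual ℝ E) (gradient Fs x)) x :=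
    hasGradientAt_iff_hasFDerivAt.mp (hFs x).hasGradientAt
  have h2 : HasFDerivAt Fl ((InnerProductSpace.toDual ℝ E) (gradient Fl x)) x :=
    hasGradientAt_iff_hasFDerivAt.mp (hFl x).hasGradientAt
  have h3 : HasFDerivAt (fun v => (1 - p) * Fs v + p * Fl v)
      ((1 - p) • (InnerProductSpace.toDual ℝ E) (gradient Fs x)
        + p • (InnerProductSpace.toDual ℝ E) (gradient Fl x)) x :=
    (h1.const_mul (1 - p)).add (h2.const_mul p)
  have h4 : HasGradientAt (fun v => (1 - p) * Fs v + p * Fl v)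
      ((1 - p) • gradient Fs x + p • gradient Fl x) x := by
    rw [hasGradientAt_iff_hasFDerivAt]
    have e : (InnerProductSpace.toDual ℝ E) ((1 - p) • gradient Fs x + p • gradient Fl x)
        = (1 - p) • (InnerProductSpace.toDual ℝ E) (gradient Fs x)
          + p • (InnerProductSpace.toDual ℝ E) (gradient Fl x) := by
      ext y
      simp [InnerProductSpace.toDual_apply_apply, inner_add_left, inner_smul_left]
    rw [e]
    exact h3
  exact h4.gradient
/-- Gradual sampling with `Δ̂ > 0`: with step size
`η₁ = min (1/L) (p² Δ̂² / (2 σ² L))` and at least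
`log(4 μ D₀ / (p² Δ̂²)) / (η₁ μ)` steps, the expected excess risk is at most
`p² Δ̂² / μ`. -/
theorem gradual_sampling_positive_bias_rate
    {d : ℕ} (Fs Fl : EuclideanSpace ℝ (Fin d) → ℝ) (p : ℝ)
    (hp0 : 0 < p) (hp1 : p ≤ 1)
    (hFs : Differentiable ℝ Fs) (hFl : Differentiable ℝ Fl)
    (𝓛 : EuclideanSpace ℝ (Fin d) → ℝ)
    (h𝓛 : 𝓛 = fun v => (1 - p) * Fs v + p * Fl v)
    (L μPL Lstar Δ σ : ℝ) (hL : 0 < L)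
    (hsmooth : LipschitzWith (Real.toNNReal L) (gradient 𝓛))
    (hμ : 0 < μPL)
    (hattained : ∃ wstar, 𝓛 wstar = Lstar ∧ ∀ v, Lstar ≤ 𝓛 v)
    (hPL : ∀ v, 2 * μPL * (𝓛 v - Lstar) ≤ ‖gradient 𝓛 v‖ ^ 2)
    (hΔ : ∀ v, ‖gradient Fs v - gradient Fl v‖ ≤ Δ) (hΔpos : 0 < Δ)
    (w0 : EuclideanSpace ℝ (Fin d)) (D₀ : ℝ) (hD₀ : D₀ = 𝓛 w0 - Lstar)
    (hD₀pos : 0 < D₀) (hσ : 0 < σ)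
    (hgap : p ^ 2 * Δ ^ 2 ≤ 4 * μPL * D₀)
    (η₁ : ℝ) (hη₁def : η₁ = min (1 / L) (p ^ 2 * Δ ^ 2 / (2 * σ ^ 2 * L)))
    (hη₁μ : η₁ * μPL ≤ 1)
    (n' : ℕ)
    (hn' : 1 / (η₁ * μPL) * Real.log (4 * μPL * D₀ / (p ^ 2 * Δ ^ 2)) ≤ n')
    {Ω : Type*} {mΩ : MeasurableSpace Ω} (P : Measure Ω) [IsProbabilityMeasure P]
    (ℱ : Filtration ℕ mΩ)
    (W G : ℕ → Ω → EuclideanSpace ℝ (Fin d))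
    (hadapted : Adapted ℱ W)
    (hGmeas : ∀ t, StronglyMeasurable[ℱ (t + 1)] (G t))
    (hG2 : ∀ t, MemLp (G t) 2 P)
    (hW0 : ∀ ω, W 0 ω = w0)
    (hupdate : ∀ t, ∀ᵐ ω ∂P, W (t + 1) ω = W t ω - η₁ • G t ω)
    (hmean : ∀ t, P[G t | ℱ t] =ᵐ[P] fun ω => gradient Fs (W t ω))
    (hvar : ∀ t, ∀ᵐ ω ∂P,
      (P[(fun ω' => ‖G t ω' - gradient Fs (W t ω')‖ ^ 2) | ℱ t]) ω ≤ σ ^ 2) :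
    (∫ ω, 𝓛 (W n' ω) ∂P) - Lstar ≤ p ^ 2 * Δ ^ 2 / μPL := by
  obtain ⟨wstar, hwstar, hLstar⟩ := hattained
  -- step size facts
  have hη_pos : 0 < η₁ := by
    rw [hη₁def]; exact lt_min (by positivity) (by positivity)
  have hηL : η₁ ≤ 1 / L := hη₁def ▸ min_le_left _ _
  have hησ : η₁ ≤ p ^ 2 * Δ ^ 2 / (2 * σ ^ 2 * L) := hη₁def ▸ min_le_right _ _
  have hηL' : η₁ * L ≤ 1 := (le_div_iff₀ hL).mp hηL
  have hησ' : η₁ * (L * σ ^ 2) ≤ p ^ 2 * Δ ^ 2 / 2 := by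
    rw [le_div_iff₀ (by positivity : (0:ℝ) < 2 * σ ^ 2 * L)] at hησ
    nlinarith
  -- differentiability and gradient facts
  have hd𝓛 : Differentiable ℝ 𝓛 := by
    rw [h𝓛]; exact (hFs.const_mul (1 - p)).add (hFl.const_mul p)
  have hcombo : ∀ x, gradient 𝓛 x = (1 - p) • gradient Fs x + p • gradient Fl x := by
    intro x; rw [h𝓛]; exact gradient_combo hFs hFl p x
  have hbias : ∀ x, ‖gradient Fs x - gradient 𝓛 x‖ ≤ p * Δ := by
    intro x
    have he : gradient Fs x - gradient 𝓛 x = p • (gradient Fs x - gradient Fl x) := by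
      rw [hcombo x]; module
    rw [he, norm_smul, Real.norm_eq_abs, abs_of_pos hp0]
    exact mul_le_mul_of_nonneg_left (hΔ x) hp0.le
  -- basic measure facts
  have hWsm : ∀ t, AEStronglyMeasurable (W t) P :=
    fun t => ((hadapted t).mono (ℱ.le t) le_rfl).aestronglyMeasurable
  have hW2 : ∀ t, MemLp (W t) 2 P := by
    intro t; induction t with
    | zero =>
      have h0 : W 0 = fun _ => w0 := funext hW0
      rw [h0]; exact memLp_const _
    | succ t ih =>
      exact (ih.sub ((hG2 t).const_smul η₁)).ae_eq
        ((hupdate t).mono fun ω h => h.symm)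
  -- the gradient process a and the conditional-mean process h
  have ha_sm : ∀ t, StronglyMeasurable[ℱ t] (fun ω => gradient 𝓛 (W t ω)) :=
    fun t => hsmooth.continuous.comp_stronglyMeasurable (hadapted t).stronglyMeasurable
  have ha2 : ∀ t, MemLp (fun ω => gradient 𝓛 (W t ω)) 2 P := by
    intro t
    refine MemLp.of_le ((memLp_const ‖gradient 𝓛 w0‖).add
      (((hW2 t).sub (memLp_const w0)).norm.const_smul L))
      ((ha_sm t).mono (ℱ.le t)).aestronglyMeasurable
      (Filter.Eventually.of_forall fun ω => ?_)
    have h1 : ‖gradient 𝓛 (W t ω) - gradient 𝓛 w0‖ ≤ L * ‖W t ω - w0‖ := by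
      have := hsmooth.dist_le_mul (W t ω) w0
      rwa [dist_eq_norm, dist_eq_norm, Real.coe_toNNReal _ hL.le] at this
    have h2 : ‖gradient 𝓛 (W t ω)‖ ≤ ‖gradient 𝓛 w0‖ + L * ‖W t ω - w0‖ := by
      have := norm_sub_norm_le (gradient 𝓛 (W t ω)) (gradient 𝓛 w0)
      linarith [h1]
    refine h2.trans (le_abs_self _)
  -- integrability of the loss along the trajectory
  have hWw0 : ∀ t, MemLp (fun ω => W t ω - w0) 2 P := fun t => (hW2 t).sub (memLp_const w0)
  have hnormsq : ∀ t, Integrable (fun ω => ‖W t ω - w0‖ ^ 2) P := by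
    intro t
    simpa only [real_inner_self_eq_norm_sq] using integrable_inner_of_memL2 (hWw0 t) (hWw0 t)
  have hint𝓛 : ∀ t, Integrable (fun ω => 𝓛 (W t ω)) P := by
    intro t
    refine Integrable.mono' (g := fun ω =>
        |Lstar| + |𝓛 w0| + ‖gradient 𝓛 w0‖ * ‖W t ω - w0‖ + L / 2 * ‖W t ω - w0‖ ^ 2)
      (((integrable_const _).add
        (((hWw0 t).norm.integrable one_le_two).const_mul ‖gradient 𝓛 w0‖)).add
        ((hnormsq t).const_mul (L / 2)))
      (hd𝓛.continuous.comp_aestronglyMeasurable (hWsm t))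
      (Filter.Eventually.of_forall fun ω => ?_)
    have hup := smooth_descent hd𝓛 hL.le hsmooth w0 (W t ω)
    have hinner := real_inner_le_norm (gradient 𝓛 w0) (W t ω - w0)
    have hlow := hLstar (W t ω)
    rw [Real.norm_eq_abs, abs_le]
    constructor
    · show -(|Lstar| + |𝓛 w0| + ‖gradient 𝓛 w0‖ * ‖W t ω - w0‖ + L / 2 * ‖W t ω - w0‖ ^ 2)
        ≤ 𝓛 (W t ω)
      nlinarith [abs_nonneg Lstar, abs_nonneg (𝓛 w0), norm_nonneg (W t ω - w0),
        norm_nonneg (gradient 𝓛 w0), sq_nonneg ‖W t ω - w0‖, neg_abs_le Lstar]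
    · show 𝓛 (W t ω)
        ≤ |Lstar| + |𝓛 w0| + ‖gradient 𝓛 w0‖ * ‖W t ω - w0‖ + L / 2 * ‖W t ω - w0‖ ^ 2
      nlinarith [abs_nonneg Lstar, le_abs_self (𝓛 w0), norm_nonneg (W t ω - w0),
        norm_nonneg (gradient 𝓛 w0), sq_nonneg ‖W t ω - w0‖]
  -- properties of h t = ∇Fs ∘ W t
  have hh_aesm : ∀ t, AEStronglyMeasurable (fun ω => gradient Fs (W t ω)) P := fun t =>
    ((stronglyMeasurable_condExp.mono (ℱ.le t)).aestronglyMeasurable).congr (hmean t)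
  have hh2 : ∀ t, MemLp (fun ω => gradient Fs (W t ω)) 2 P := by
    intro t
    refine MemLp.of_le (((ha2 t).norm).add (memLp_const (p * Δ))) (hh_aesm t)
      (Filter.Eventually.of_forall fun ω => ?_)
    have h1 := hbias (W t ω)
    have h2 := norm_sub_norm_le (gradient Fs (W t ω)) (gradient 𝓛 (W t ω))
    show ‖gradient Fs (W t ω)‖ ≤ ‖‖gradient 𝓛 (W t ω)‖ + p * Δ‖
    refine le_trans (by linarith) (le_abs_self _)
  have hhm' : ∀ t, AEStronglyMeasurable[ℱ t] (fun ω => gradient Fs (W t ω)) P := fun t =>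
    AEStronglyMeasurable.congr stronglyMeasurable_condExp.aestronglyMeasurable (hmean t)
  -- integrability of the various quadratic quantities
  have haGint : ∀ t, Integrable (fun ω => ⟪gradient 𝓛 (W t ω), G t ω⟫) P :=
    fun t => integrable_inner_of_memL2 (ha2 t) (hG2 t)
  have hahint : ∀ t, Integrable (fun ω => ⟪gradient 𝓛 (W t ω), gradient Fs (W t ω)⟫) P :=
    fun t => integrable_inner_of_memL2 (ha2 t) (hh2 t)
  have hhGint : ∀ t, Integrable (fun ω => ⟪gradient Fs (W t ω), G t ω⟫) P :=
    fun t => integrable_inner_of_memL2 (hh2 t) (hG2 t)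
  have hG2int : ∀ t, Integrable (fun ω => ‖G t ω‖ ^ 2) P := fun t => by
    simpa only [real_inner_self_eq_norm_sq] using integrable_inner_of_memL2 (hG2 t) (hG2 t)
  have hh2int : ∀ t, Integrable (fun ω => ‖gradient Fs (W t ω)‖ ^ 2) P := fun t => by
    simpa only [real_inner_self_eq_norm_sq] using integrable_inner_of_memL2 (hh2 t) (hh2 t)
  have ha2int : ∀ t, Integrable (fun ω => ‖gradient 𝓛 (W t ω)‖ ^ 2) P := fun t => by
    simpa only [real_inner_self_eq_norm_sq] using integrable_inner_of_memL2 (ha2 t) (ha2 t)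
  have hGh2int : ∀ t, Integrable (fun ω => ‖G t ω - gradient Fs (W t ω)‖ ^ 2) P := fun t => by
    simpa only [real_inner_self_eq_norm_sq, Pi.sub_apply] using
      integrable_inner_of_memL2 ((hG2 t).sub (hh2 t)) ((hG2 t).sub (hh2 t))
  -- key conditional expectation identities
  have hinner_aG : ∀ t, ∫ ω, ⟪gradient 𝓛 (W t ω), G t ω⟫ ∂P
      = ∫ ω, ⟪gradient 𝓛 (W t ω), gradient Fs (W t ω)⟫ ∂P := by
    intro t
    rw [integral_inner_condexp (ℱ.le t) ((ha_sm t).aestronglyMeasurable) (ha2 t) (hG2 t)]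
    refine integral_congr_ae ?_
    filter_upwards [hmean t] with ω hω
    rw [hω]
  have hinner_hG : ∀ t, ∫ ω, ⟪gradient Fs (W t ω), G t ω⟫ ∂P
      = ∫ ω, ‖gradient Fs (W t ω)‖ ^ 2 ∂P := by
    intro t
    rw [integral_inner_condexp (ℱ.le t) (hhm' t) (hh2 t) (hG2 t)]
    refine integral_congr_ae ?_
    filter_upwards [hmean t] with ω hω
    rw [hω, real_inner_self_eq_norm_sq]
  -- the variance bound
  have hvar' : ∀ t, ∫ ω, ‖G t ω - gradient Fs (W t ω)‖ ^ 2 ∂P ≤ σ ^ 2 := by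
    intro t
    have h1 := integral_condExp (ℱ.le t)
      (f := fun ω' => ‖G t ω' - gradient Fs (W t ω')‖ ^ 2) (μ := P)
    rw [← h1]
    calc ∫ ω, (P[(fun ω' => ‖G t ω' - gradient Fs (W t ω')‖ ^ 2)|ℱ t]) ω ∂P
        ≤ ∫ _ω, σ ^ 2 ∂P := integral_mono_ae integrable_condExp (integrable_const _) (hvar t)
      _ = σ ^ 2 := by simp
  -- second moment of G
  have hnormG : ∀ t, ∫ ω, ‖G t ω‖ ^ 2 ∂P
      ≤ σ ^ 2 + ∫ ω, ‖gradient Fs (W t ω)‖ ^ 2 ∂P := by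
    intro t
    have hid : (fun ω => ‖G t ω‖ ^ 2) = fun ω =>
        ‖G t ω - gradient Fs (W t ω)‖ ^ 2 + 2 * ⟪gradient Fs (W t ω), G t ω⟫
          - ‖gradient Fs (W t ω)‖ ^ 2 := by
      funext ω
      rw [norm_sub_sq_real, real_inner_comm]
      ring
    have hAB : Integrable (fun ω => ‖G t ω - gradient Fs (W t ω)‖ ^ 2
        + 2 * ⟪gradient Fs (W t ω), G t ω⟫) P := (hGh2int t).add ((hhGint t).const_mul 2)
    have e1 : ∫ ω, (‖G t ω - gradient Fs (W t ω)‖ ^ 2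
          + 2 * ⟪gradient Fs (W t ω), G t ω⟫ - ‖gradient Fs (W t ω)‖ ^ 2) ∂P
        = (∫ ω, (‖G t ω - gradient Fs (W t ω)‖ ^ 2
          + 2 * ⟪gradient Fs (W t ω), G t ω⟫) ∂P) - ∫ ω, ‖gradient Fs (W t ω)‖ ^ 2 ∂P :=
      integral_sub hAB (hh2int t)
    have e2 : ∫ ω, (‖G t ω - gradient Fs (W t ω)‖ ^ 2
          + 2 * ⟪gradient Fs (W t ω), G t ω⟫) ∂P
        = (∫ ω, ‖G t ω - gradient Fs (W t ω)‖ ^ 2 ∂P)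
          + ∫ ω, 2 * ⟪gradient Fs (W t ω), G t ω⟫ ∂P :=
      integral_add (hGh2int t) ((hhGint t).const_mul 2)
    have e3 : ∫ ω, 2 * ⟪gradient Fs (W t ω), G t ω⟫ ∂P
        = 2 * ∫ ω, ⟪gradient Fs (W t ω), G t ω⟫ ∂P := integral_const_mul 2 _
    rw [hid, e1, e2, e3, hinner_hG t]
    have := hvar' t
    linarith
  -- one-step descent inequality (almost everywhere)
  have hdescent : ∀ t, ∀ᵐ ω ∂P, 𝓛 (W (t + 1) ω) ≤ 𝓛 (W t ω)
      - η₁ * ⟪gradient 𝓛 (W t ω), G t ω⟫ + L * η₁ ^ 2 / 2 * ‖G t ω‖ ^ 2 := by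
    intro t
    filter_upwards [hupdate t] with ω hω
    have hd := smooth_descent hd𝓛 hL.le hsmooth (W t ω) (W (t + 1) ω)
    rw [hω] at hd
    have he : W t ω - η₁ • G t ω - W t ω = -(η₁ • G t ω) := by abel
    rw [he, inner_neg_right, real_inner_smul_right, norm_neg, norm_smul,
      Real.norm_eq_abs, abs_of_pos hη_pos, mul_pow] at hd
    rw [hω]
    nlinarith [sq_nonneg ‖G t ω‖]
  -- one-step recursion in expectation
  have step : ∀ t, (∫ ω, 𝓛 (W (t + 1) ω) ∂P) - Lstar
      ≤ (1 - η₁ * μPL) * ((∫ ω, 𝓛 (W t ω) ∂P) - Lstar) + 3 / 4 * η₁ * (p ^ 2 * Δ ^ 2) := by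
    intro t
    -- integrate the descent inequality
    have h1 : ∫ ω, 𝓛 (W (t + 1) ω) ∂P ≤ (∫ ω, 𝓛 (W t ω) ∂P)
        - η₁ * ∫ ω, ⟪gradient 𝓛 (W t ω), G t ω⟫ ∂P
        + L * η₁ ^ 2 / 2 * ∫ ω, ‖G t ω‖ ^ 2 ∂P := by
      have hD : Integrable (fun ω => 𝓛 (W t ω)
          - η₁ * ⟪gradient 𝓛 (W t ω), G t ω⟫) P :=
        (hint𝓛 t).sub ((haGint t).const_mul η₁)
      have hIa : Integrable (fun ω => 𝓛 (W t ω) - η₁ * ⟪gradient 𝓛 (W t ω), G t ω⟫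
          + L * η₁ ^ 2 / 2 * ‖G t ω‖ ^ 2) P := hD.add ((hG2int t).const_mul (L * η₁ ^ 2 / 2))
      have h2 := integral_mono_ae (hint𝓛 (t + 1)) hIa (hdescent t)
      have e1 : ∫ ω, (𝓛 (W t ω) - η₁ * ⟪gradient 𝓛 (W t ω), G t ω⟫
            + L * η₁ ^ 2 / 2 * ‖G t ω‖ ^ 2) ∂P
          = (∫ ω, (𝓛 (W t ω) - η₁ * ⟪gradient 𝓛 (W t ω), G t ω⟫) ∂P)
            + ∫ ω, L * η₁ ^ 2 / 2 * ‖G t ω‖ ^ 2 ∂P :=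
        integral_add hD ((hG2int t).const_mul (L * η₁ ^ 2 / 2))
      have e2 : ∫ ω, (𝓛 (W t ω) - η₁ * ⟪gradient 𝓛 (W t ω), G t ω⟫) ∂P
          = (∫ ω, 𝓛 (W t ω) ∂P) - ∫ ω, η₁ * ⟪gradient 𝓛 (W t ω), G t ω⟫ ∂P :=
        integral_sub (hint𝓛 t) ((haGint t).const_mul η₁)
      have e3 : ∫ ω, η₁ * ⟪gradient 𝓛 (W t ω), G t ω⟫ ∂P
          = η₁ * ∫ ω, ⟪gradient 𝓛 (W t ω), G t ω⟫ ∂P := integral_const_mul η₁ _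
      have e4 : ∫ ω, L * η₁ ^ 2 / 2 * ‖G t ω‖ ^ 2 ∂P
          = L * η₁ ^ 2 / 2 * ∫ ω, ‖G t ω‖ ^ 2 ∂P := integral_const_mul _ _
      rw [e1, e2, e3, e4] at h2
      exact h2
    rw [hinner_aG t] at h1
    -- cross term lower bound
    have h3 : ∫ ω, ⟪gradient 𝓛 (W t ω), gradient Fs (W t ω)⟫ ∂P
        ≥ 1 / 2 * ∫ ω, ‖gradient 𝓛 (W t ω)‖ ^ 2 ∂P
          + 1 / 2 * (∫ ω, ‖gradient Fs (W t ω)‖ ^ 2 ∂P) - 1 / 2 * (p ^ 2 * Δ ^ 2) := by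
      have hpt : ∀ ω, 1 / 2 * ‖gradient 𝓛 (W t ω)‖ ^ 2 + 1 / 2 * ‖gradient Fs (W t ω)‖ ^ 2
          - 1 / 2 * (p ^ 2 * Δ ^ 2) ≤ ⟪gradient 𝓛 (W t ω), gradient Fs (W t ω)⟫ := by
        intro ω
        have hb := hbias (W t ω)
        have hsq : ‖gradient Fs (W t ω) - gradient 𝓛 (W t ω)‖ ^ 2 ≤ (p * Δ) ^ 2 := by
          exact pow_le_pow_left₀ (norm_nonneg _) hb 2
        rw [norm_sub_sq_real, real_inner_comm] at hsq
        nlinarith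
      have hI3 : Integrable (fun ω => 1 / 2 * ‖gradient 𝓛 (W t ω)‖ ^ 2
          + 1 / 2 * ‖gradient Fs (W t ω)‖ ^ 2 - 1 / 2 * (p ^ 2 * Δ ^ 2)) P :=
        (((ha2int t).const_mul (1/2)).add ((hh2int t).const_mul (1/2))).sub (integrable_const _)
      have hI3' : Integrable (fun ω => 1 / 2 * ‖gradient 𝓛 (W t ω)‖ ^ 2
          + 1 / 2 * ‖gradient Fs (W t ω)‖ ^ 2) P :=
        ((ha2int t).const_mul (1/2)).add ((hh2int t).const_mul (1/2))
      have h4 := integral_mono_ae hI3 (hahint t) (Filter.Eventually.of_forall hpt)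
      have e1 : ∫ ω, (1 / 2 * ‖gradient 𝓛 (W t ω)‖ ^ 2
            + 1 / 2 * ‖gradient Fs (W t ω)‖ ^ 2 - 1 / 2 * (p ^ 2 * Δ ^ 2)) ∂P
          = (∫ ω, (1 / 2 * ‖gradient 𝓛 (W t ω)‖ ^ 2
            + 1 / 2 * ‖gradient Fs (W t ω)‖ ^ 2) ∂P) - ∫ _ω, 1 / 2 * (p ^ 2 * Δ ^ 2) ∂P :=
        integral_sub hI3' (integrable_const _)
      have e2 : ∫ ω, (1 / 2 * ‖gradient 𝓛 (W t ω)‖ ^ 2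
            + 1 / 2 * ‖gradient Fs (W t ω)‖ ^ 2) ∂P
          = (∫ ω, 1 / 2 * ‖gradient 𝓛 (W t ω)‖ ^ 2 ∂P)
            + ∫ ω, 1 / 2 * ‖gradient Fs (W t ω)‖ ^ 2 ∂P :=
        integral_add ((ha2int t).const_mul (1/2)) ((hh2int t).const_mul (1/2))
      have e3 : ∫ ω, 1 / 2 * ‖gradient 𝓛 (W t ω)‖ ^ 2 ∂P
          = 1 / 2 * ∫ ω, ‖gradient 𝓛 (W t ω)‖ ^ 2 ∂P := integral_const_mul _ _
      have e4 : ∫ ω, 1 / 2 * ‖gradient Fs (W t ω)‖ ^ 2 ∂P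
          = 1 / 2 * ∫ ω, ‖gradient Fs (W t ω)‖ ^ 2 ∂P := integral_const_mul _ _
      rw [e1, e2, e3, e4] at h4
      simp only [integral_const, measure_univ, probReal_univ, ENNReal.toReal_one, one_smul, smul_eq_mul, one_mul] at h4
      linarith
    -- PL inequality in expectation
    have h5 : 2 * μPL * ((∫ ω, 𝓛 (W t ω) ∂P) - Lstar)
        ≤ ∫ ω, ‖gradient 𝓛 (W t ω)‖ ^ 2 ∂P := by
      have hI5 : Integrable (fun ω => 2 * μPL * (𝓛 (W t ω) - Lstar)) P :=
        ((hint𝓛 t).sub (integrable_const Lstar)).const_mul (2 * μPL)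
      have hI5' : Integrable (fun ω => 𝓛 (W t ω) - Lstar) P :=
        (hint𝓛 t).sub (integrable_const Lstar)
      have h6 := integral_mono_ae hI5 (ha2int t) (Filter.Eventually.of_forall fun ω => hPL (W t ω))
      have e5 : ∫ ω, 2 * μPL * (𝓛 (W t ω) - Lstar) ∂P
          = 2 * μPL * ∫ ω, (𝓛 (W t ω) - Lstar) ∂P := integral_const_mul _ _
      have e6 : ∫ ω, (𝓛 (W t ω) - Lstar) ∂P
          = (∫ ω, 𝓛 (W t ω) ∂P) - ∫ _ω, Lstar ∂P := integral_sub (hint𝓛 t) (integrable_const _)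
      rw [e5, e6] at h6
      simp only [integral_const, measure_univ, probReal_univ, ENNReal.toReal_one, one_smul] at h6
      exact h6
    -- nonnegativity facts
    have hhnn : 0 ≤ ∫ ω, ‖gradient Fs (W t ω)‖ ^ 2 ∂P :=
      integral_nonneg fun ω => sq_nonneg _
    have hGnn : 0 ≤ ∫ ω, ‖G t ω‖ ^ 2 ∂P := integral_nonneg fun ω => sq_nonneg _
    have h7 := hnormG t
    -- Lη₁² ≤ η₁ and Lη₁²σ²/2 ≤ η₁p²Δ²/4
    have h8 : L * η₁ ^ 2 / 2 * ∫ ω, ‖G t ω‖ ^ 2 ∂P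
        ≤ L * η₁ ^ 2 / 2 * (σ ^ 2 + ∫ ω, ‖gradient Fs (W t ω)‖ ^ 2 ∂P) := by
      apply mul_le_mul_of_nonneg_left h7 (by positivity)
    have h9 : L * η₁ ^ 2 / 2 * (∫ ω, ‖gradient Fs (W t ω)‖ ^ 2 ∂P)
        ≤ η₁ / 2 * ∫ ω, ‖gradient Fs (W t ω)‖ ^ 2 ∂P := by
      apply mul_le_mul_of_nonneg_right _ hhnn
      nlinarith [sq_nonneg η₁, hη_pos.le]
    have h10 : L * η₁ ^ 2 / 2 * σ ^ 2 ≤ η₁ / 4 * (p ^ 2 * Δ ^ 2) := by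
      nlinarith [hη_pos.le]
    nlinarith [mul_le_mul_of_nonneg_left h3 hη_pos.le,
      mul_le_mul_of_nonneg_left h5 (by positivity : (0:ℝ) ≤ η₁ / 2)]
  -- iterate the recursion
  have main : ∀ n : ℕ, (∫ ω, 𝓛 (W n ω) ∂P) - Lstar
      ≤ (1 - η₁ * μPL) ^ n * D₀ + 3 / 4 * (p ^ 2 * Δ ^ 2) / μPL := by
    intro n
    induction n with
    | zero =>
      have h0 : (fun ω => 𝓛 (W 0 ω)) = fun _ω => 𝓛 w0 := funext fun ω => by rw [hW0 ω]
      rw [h0]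
      simp only [integral_const, measure_univ, probReal_univ, ENNReal.toReal_one, one_smul, smul_eq_mul,
        pow_zero, one_mul]
      have : 0 ≤ 3 / 4 * (p ^ 2 * Δ ^ 2) / μPL := by positivity
      linarith [hD₀.ge]
    | succ n ih =>
      have hq : 0 ≤ 1 - η₁ * μPL := by linarith
      have hstep := step n
      have h2 := mul_le_mul_of_nonneg_left ih hq
      have hc : η₁ * μPL * (3 / 4 * (p ^ 2 * Δ ^ 2) / μPL) = 3 / 4 * η₁ * (p ^ 2 * Δ ^ 2) := by
        field_simp
      have key : (1 - η₁ * μPL) * ((1 - η₁ * μPL) ^ n * D₀ + 3 / 4 * (p ^ 2 * Δ ^ 2) / μPL)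
          + 3 / 4 * η₁ * (p ^ 2 * Δ ^ 2)
          ≤ (1 - η₁ * μPL) ^ (n + 1) * D₀ + 3 / 4 * (p ^ 2 * Δ ^ 2) / μPL := by
        rw [pow_succ (1 - η₁ * μPL) n]
        linarith [show (1 - η₁ * μPL) * ((1 - η₁ * μPL) ^ n * D₀ + 3 / 4 * (p ^ 2 * Δ ^ 2) / μPL)
            + η₁ * μPL * (3 / 4 * (p ^ 2 * Δ ^ 2) / μPL)
            = (1 - η₁ * μPL) ^ n * (1 - η₁ * μPL) * D₀ + 3 / 4 * (p ^ 2 * Δ ^ 2) / μPL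
          from by ring, hc]
      linarith
  -- final numeric estimate
  have hqexp : (1 - η₁ * μPL) ^ n' * D₀ ≤ p ^ 2 * Δ ^ 2 / (4 * μPL) := by
    have hq : 0 ≤ 1 - η₁ * μPL := by linarith
    have hημ : 0 < η₁ * μPL := mul_pos hη_pos hμ
    have hR : 0 < 4 * μPL * D₀ / (p ^ 2 * Δ ^ 2) := by positivity
    have h1 : (1 - η₁ * μPL : ℝ) ≤ Real.exp (-(η₁ * μPL)) := by
      have := Real.add_one_le_exp (-(η₁ * μPL))
      linarith
    have h2 : (1 - η₁ * μPL) ^ n' ≤ Real.exp (-(η₁ * μPL)) ^ n' :=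
      pow_le_pow_left₀ hq h1 n'
    have h3 : Real.exp (-(η₁ * μPL)) ^ n' = Real.exp ((n' : ℝ) * -(η₁ * μPL)) :=
      (Real.exp_nat_mul _ n').symm
    have h4 : Real.log (4 * μPL * D₀ / (p ^ 2 * Δ ^ 2)) ≤ (n' : ℝ) * (η₁ * μPL) := by
      rw [one_div_mul_eq_div, div_le_iff₀ hημ] at hn'
      linarith
    have h5 : Real.exp ((n' : ℝ) * -(η₁ * μPL)) ≤ p ^ 2 * Δ ^ 2 / (4 * μPL * D₀) := by
      have h6 : p ^ 2 * Δ ^ 2 / (4 * μPL * D₀) = (4 * μPL * D₀ / (p ^ 2 * Δ ^ 2))⁻¹ := by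
        rw [inv_div]
      rw [h6, ← Real.exp_log (inv_pos.mpr hR), Real.log_inv]
      exact Real.exp_le_exp.mpr (by nlinarith [h4])
    have h7 : (1 - η₁ * μPL) ^ n' * D₀ ≤ p ^ 2 * Δ ^ 2 / (4 * μPL * D₀) * D₀ := by
      apply mul_le_mul_of_nonneg_right _ hD₀pos.le
      exact h2.trans (h3.le.trans (h3.ge.trans (h3.le.trans h5)))
    calc (1 - η₁ * μPL) ^ n' * D₀ ≤ p ^ 2 * Δ ^ 2 / (4 * μPL * D₀) * D₀ := h7
      _ = p ^ 2 * Δ ^ 2 / (4 * μPL) := by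
          field_simp
  have := main n'
  have hfin : p ^ 2 * Δ ^ 2 / (4 * μPL) + 3 / 4 * (p ^ 2 * Δ ^ 2) / μPL
      = p ^ 2 * Δ ^ 2 / μPL := by
    field_simp
    ring
  linarith
end
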